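/- arXiv:1803.01267 — 4 statements merged into one kernel-verified Lean document; each statement's English description precedes it below -/
import Mathlib

section
/- Let n ≥ 1 be a natural number. The linear span of the set of functions S → ℝ of the form x ↦ MvPolynomial.eval (fun i => x i) p, where p ∈ MvPolynomial (Fin n) ℝ is harmonic and homogeneous of some degree a, is dense in L²(S, μ). -/
open MvPolynomial MeasureTheory

/-- The `(n−1)`-dimensional Hausdorff measure restricted to the unit sphere
`S = {x : ‖x‖ = 1}` in `EuclideanSpace ℝ (Fin n)`. -/
noncomputable def sphereMeasure (n : ℕ) : Measure (EuclideanSpace ℝ (Fin n)) :=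
  (Measure.hausdorffMeasure ((n : ℝ) - 1)).restrict
    {x : EuclideanSpace ℝ (Fin n) | ‖x‖ = 1}

namespace SphereHarmAux

variable {n : ℕ}

/-- The Laplacian as a linear map. -/
noncomputable def lapL (n : ℕ) : MvPolynomial (Fin n) ℝ →ₗ[ℝ] MvPolynomial (Fin n) ℝ :=
  ∑ i, ((pderiv i).toLinearMap ∘ₗ (pderiv i).toLinearMap)

lemma lapL_apply (p : MvPolynomial (Fin n) ℝ) :
    lapL n p = ∑ i, pderiv i (pderiv i p) := by
  simp [lapL]

/-- The squared-radius polynomial. -/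
noncomputable def r2 (n : ℕ) : MvPolynomial (Fin n) ℝ := ∑ i, X i ^ 2

lemma sum_univ_eq_degree (m : Fin n →₀ ℕ) : ∑ i, m i = m.degree :=
  (Finset.sum_subset (Finset.subset_univ _) (fun i _ h => by
    simpa using Finsupp.notMem_support_iff.1 h)).symm

lemma degree_of_mem_support {p : MvPolynomial (Fin n) ℝ} {a : ℕ} (hp : p.IsHomogeneous a)
    {m : Fin n →₀ ℕ} (hm : m ∈ p.support) : ∑ i, m i = a := by
  rw [sum_univ_eq_degree]
  by_contra h
  exact mem_support_iff.1 hm (hp.coeff_eq_zero h)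

lemma sub_single_add (m : Fin n →₀ ℕ) (i : Fin n) (h : m i ≠ 0) :
    m - Finsupp.single i 1 + Finsupp.single i 1 = m := by
  ext j
  simp only [Finsupp.add_apply, Finsupp.tsub_apply, Finsupp.single_apply]
  split_ifs with hji
  · subst hji; omega
  · simp

lemma pderiv_isHomogeneous {p : MvPolynomial (Fin n) ℝ} {a : ℕ} (hp : p.IsHomogeneous a)
    (i : Fin n) : (pderiv i p).IsHomogeneous (a - 1) := by
  conv_lhs => rw [p.as_sum]
  rw [map_sum]
  apply IsHomogeneous.sum
  intro m hm
  rw [pderiv_monomial]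
  rcases eq_or_ne (m i) 0 with h0 | h0
  · rw [h0]; simpa using isHomogeneous_zero _ _ _
  · apply isHomogeneous_monomial
    have hdm : ∑ j, m j = a := degree_of_mem_support hp hm
    have h1 : (m - Finsupp.single i 1) + Finsupp.single i 1 = m := sub_single_add m i h0
    have := congrArg (fun f : Fin n →₀ ℕ => ∑ j, f j) h1
    simp only [Finsupp.add_apply, Finset.sum_add_distrib] at this
    have hs : ∑ j, Finsupp.single i (1:ℕ) j = 1 := by
      simp [Finsupp.single_apply]
    rw [← sum_univ_eq_degree]
    omega

lemma lap_isHomogeneous {p : MvPolynomial (Fin n) ℝ} {a : ℕ} (hp : p.IsHomogeneous a) :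
    (lapL n p).IsHomogeneous (a - 2) := by
  rw [lapL_apply]
  apply IsHomogeneous.sum
  intro i _
  have := pderiv_isHomogeneous (pderiv_isHomogeneous hp i) i
  simpa [Nat.sub_sub] using this

lemma X_mul_pderiv_monomial (i : Fin n) (m : Fin n →₀ ℕ) (c : ℝ) :
    X i * pderiv i (monomial m c) = (m i) • monomial m c := by
  rw [pderiv_monomial]
  rcases eq_or_ne (m i) 0 with h0 | h0
  · simp [h0]
  · rw [X, monomial_mul, smul_monomial, add_comm, sub_single_add m i h0]
    congr 1
    simp [nsmul_eq_mul]
    ring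

lemma euler {p : MvPolynomial (Fin n) ℝ} {a : ℕ} (hp : p.IsHomogeneous a) :
    ∑ i, X i * pderiv i p = a • p := by
  conv_lhs => rw [p.as_sum]
  conv_rhs => rw [p.as_sum]
  rw [Finset.smul_sum]
  simp only [map_sum, Finset.mul_sum]
  rw [Finset.sum_comm]
  refine Finset.sum_congr rfl fun m hm => ?_
  have : ∀ i : Fin n, X i * pderiv i (monomial m (coeff m p)) = (m i) • monomial m (coeff m p) :=
    fun i => X_mul_pderiv_monomial i m _
  rw [Finset.sum_congr rfl fun i _ => this i, ← Finset.sum_smul,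
    degree_of_mem_support hp hm]

lemma isHomogeneous_r2 : (r2 n).IsHomogeneous 2 := by
  apply IsHomogeneous.sum
  intro i _
  simpa using isHomogeneous_X_pow i 2

lemma pderiv_two (i : Fin n) : pderiv i (2 : MvPolynomial (Fin n) ℝ) = 0 := by
  rw [← map_ofNat (C : ℝ →+* MvPolynomial (Fin n) ℝ) 2, pderiv_C]

lemma pderiv_r2 (i : Fin n) : pderiv i (r2 n) = 2 * X i := by
  rw [r2, map_sum]
  rw [Finset.sum_eq_single i]
  · rw [pderiv_pow, pderiv_X_self]; norm_num
  · intro j _ hj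
    rw [pderiv_pow, pderiv_X_of_ne hj]; ring
  · intro h; exact absurd (Finset.mem_univ i) h

lemma lap_r2_mul {q : MvPolynomial (Fin n) ℝ} {k : ℕ} (hq : q.IsHomogeneous k) :
    lapL n (r2 n * q) =
      ((2 * n + 4 * k : ℕ) : MvPolynomial (Fin n) ℝ) * q + r2 n * lapL n q := by
  rw [lapL_apply, lapL_apply]
  have step : ∀ i : Fin n, pderiv i (pderiv i (r2 n * q)) =
      2 * q + 4 * (X i * pderiv i q) + r2 n * pderiv i (pderiv i q) := by
    intro i
    simp only [pderiv_mul, pderiv_r2, pderiv_two, pderiv_X_self, map_add, zero_mul,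
      mul_one]
    ring
  rw [Finset.sum_congr rfl fun i _ => step i]
  rw [Finset.sum_add_distrib, Finset.sum_add_distrib, ← Finset.mul_sum, ← Finset.mul_sum,
    euler hq, Finset.sum_const, Finset.card_univ, Fintype.card_fin]
  simp only [nsmul_eq_mul]
  push_cast
  rw [Finset.mul_sum]
  ring

lemma lap_r2pow_mul {q : MvPolynomial (Fin n) ℝ} {k : ℕ} (hq : q.IsHomogeneous k)
    (hn : 1 ≤ n) (j : ℕ) :
    ∃ d : ℕ, 0 < d ∧
      lapL n (r2 n ^ (j + 1) * q) =
        ((d : ℕ) : MvPolynomial (Fin n) ℝ) * (r2 n ^ j * q) + r2 n ^ (j + 1) * lapL n q := by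
  induction j with
  | zero =>
      refine ⟨2 * n + 4 * k, by omega, ?_⟩
      have := lap_r2_mul hq
      rw [pow_one, pow_zero, one_mul]
      simpa using this
  | succ j ih =>
      obtain ⟨d, hd, hld⟩ := ih
      have hpow : (r2 n ^ (j + 1) * q).IsHomogeneous (2 * (j + 1) + k) := by
        simpa using (isHomogeneous_r2.pow (j+1)).mul hq
      refine ⟨2 * n + 4 * (2 * (j + 1) + k) + d, by omega, ?_⟩
      have h1 : r2 n ^ (j + 1 + 1) * q = r2 n * (r2 n ^ (j + 1) * q) := by ring
      rw [h1, lap_r2_mul hpow, hld]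
      push_cast
      ring

lemma r2_ne_zero (hn : 1 ≤ n) : r2 n ≠ 0 := by
  intro h
  have h2 : eval (fun _ : Fin n => (1:ℝ)) (r2 n) = 0 := by rw [h]; simp
  rw [r2, map_sum] at h2
  simp at h2
  omega

lemma pderiv_eq_zero_of_isHomogeneous_zero {p : MvPolynomial (Fin n) ℝ}
    (hp : p.IsHomogeneous 0) (i : Fin n) : pderiv i p = 0 := by
  conv_lhs => rw [p.as_sum]
  rw [map_sum]
  apply Finset.sum_eq_zero
  intro m hm
  have h0 : m i = 0 := by
    have hs := degree_of_mem_support hp hm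
    have : m i ≤ ∑ j, m j := Finset.single_le_sum (fun j _ => Nat.zero_le _) (Finset.mem_univ i)
    omega
  rw [pderiv_monomial, h0]
  simp

lemma lap_eq_zero_of_le_one {p : MvPolynomial (Fin n) ℝ} {a : ℕ} (hp : p.IsHomogeneous a)
    (ha : a ≤ 1) : lapL n p = 0 := by
  rw [lapL_apply]
  apply Finset.sum_eq_zero
  intro i _
  have h1 : (pderiv i p).IsHomogeneous 0 := by
    have := pderiv_isHomogeneous hp i
    rwa [show a - 1 = 0 by omega] at this
  simp [pderiv_eq_zero_of_isHomogeneous_zero h1 i]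

lemma lap_r2pow_injective (hn : 1 ≤ n) :
    ∀ k : ℕ, ∀ q : MvPolynomial (Fin n) ℝ, q.IsHomogeneous k →
      ∀ j : ℕ, lapL n (r2 n ^ (j + 1) * q) = 0 → q = 0 := by
  intro k
  induction k using Nat.strong_induction_on with
  | _ k IH =>
    intro q hq j h0
    obtain ⟨d, hd, hld⟩ := lap_r2pow_mul hq hn j
    rw [h0] at hld
    have hdR : ((d : ℝ) : ℝ) ≠ 0 := Nat.cast_ne_zero.2 (by omega)
    have hcast : ((d : ℕ) : MvPolynomial (Fin n) ℝ) = C ((d : ℕ) : ℝ) := by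
      simp
    rcases le_or_gt k 1 with hk | hk
    · rw [lap_eq_zero_of_le_one hq hk, mul_zero, add_zero] at hld
      have h3 : ((d : ℕ) : MvPolynomial (Fin n) ℝ) ≠ 0 := by
        rw [hcast]
        simp only [ne_eq, C_eq_zero]
        exact hdR
      rcases mul_eq_zero.1 hld.symm with h | h
      · exact absurd h h3
      · rcases mul_eq_zero.1 h with h' | h'
        · exact absurd h' (pow_ne_zero _ (r2_ne_zero hn))
        · exact h'
    · -- k ≥ 2
      have hfac : r2 n ^ j * (((d : ℕ) : MvPolynomial (Fin n) ℝ) * q + r2 n * lapL n q) = 0 := by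
        rw [show r2 n ^ j * (((d : ℕ) : MvPolynomial (Fin n) ℝ) * q + r2 n * lapL n q)
            = ((d : ℕ) : MvPolynomial (Fin n) ℝ) * (r2 n ^ j * q) + r2 n ^ (j + 1) * lapL n q
          from by ring, ← hld]
      have hzero : ((d : ℕ) : MvPolynomial (Fin n) ℝ) * q + r2 n * lapL n q = 0 := by
        rcases mul_eq_zero.1 hfac with h' | h'
        · exact absurd h' (pow_ne_zero _ (r2_ne_zero hn))
        · exact h'
      set q2 : MvPolynomial (Fin n) ℝ := C (-((d:ℝ))⁻¹) * lapL n q with hq2def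
      have hq2hom : q2.IsHomogeneous (k - 2) := (lap_isHomogeneous hq).C_mul _
      have hq2 : q = r2 n * q2 := by
        have h5 : C ((d:ℝ)) * q = -(r2 n * lapL n q) := by
          rw [eq_neg_iff_add_eq_zero, ← hcast]
          exact hzero
        calc q = C ((d:ℝ))⁻¹ * (C ((d:ℝ)) * q) := by
                rw [← mul_assoc, ← C_mul, inv_mul_cancel₀ hdR, C_1, one_mul]
        _ = C ((d:ℝ))⁻¹ * -(r2 n * lapL n q) := by rw [h5]
        _ = r2 n * (C (-((d:ℝ))⁻¹) * lapL n q) := by rw [map_neg]; ring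
      have hnext : lapL n (r2 n ^ (j + 1 + 1) * q2) = 0 := by
        have he : r2 n ^ (j + 1 + 1) * q2 = r2 n ^ (j + 1) * q := by
          rw [hq2]; ring
        rw [he, h0]
      have := IH (k - 2) (by omega) q2 hq2hom (j+1) hnext
      rw [hq2, this, mul_zero]

instance homog_fd (k : ℕ) : FiniteDimensional ℝ (homogeneousSubmodule (Fin n) ℝ k) := by
  have hle : homogeneousSubmodule (Fin n) ℝ k ≤ restrictTotalDegree (Fin n) ℝ k := by
    intro p hp
    rw [mem_restrictTotalDegree]
    exact ((mem_homogeneousSubmodule _ _).1 hp).totalDegree_le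
  exact Submodule.finiteDimensional_of_le hle

/-- The operator `q ↦ Δ(r² q)` on homogeneous polynomials of degree `k`. -/
noncomputable def Lop (n k : ℕ) :
    homogeneousSubmodule (Fin n) ℝ k →ₗ[ℝ] homogeneousSubmodule (Fin n) ℝ k where
  toFun q := ⟨lapL n (r2 n * (q : MvPolynomial (Fin n) ℝ)), by
    rw [mem_homogeneousSubmodule]
    have h1 : ((r2 n) * (q : MvPolynomial (Fin n) ℝ)).IsHomogeneous (2 + k) :=
      isHomogeneous_r2.mul ((mem_homogeneousSubmodule _ _).1 q.2)
    have := lap_isHomogeneous h1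
    rwa [show 2 + k - 2 = k by omega] at this⟩
  map_add' q q' := by
    ext1
    simp [mul_add, map_add]
  map_smul' c q := by
    ext1
    simp [mul_smul_comm, _root_.map_smul]

lemma Lop_surjective (hn : 1 ≤ n) (k : ℕ) : Function.Surjective (Lop n k) := by
  rw [← LinearMap.injective_iff_surjective]
  intro q q' hqq
  have h0 : lapL n (r2 n * ((q : MvPolynomial (Fin n) ℝ) - (q' : MvPolynomial (Fin n) ℝ))) = 0 := by
    have := congrArg (fun x : homogeneousSubmodule (Fin n) ℝ k => (x : MvPolynomial (Fin n) ℝ)) hqq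
    simp only [Lop, LinearMap.coe_mk, AddHom.coe_mk] at this
    rw [mul_sub, map_sub, this, sub_self]
  have hhom : ((q : MvPolynomial (Fin n) ℝ) - (q' : MvPolynomial (Fin n) ℝ)).IsHomogeneous k :=
    ((mem_homogeneousSubmodule _ _).1 q.2).sub ((mem_homogeneousSubmodule _ _).1 q'.2)
  have := lap_r2pow_injective hn k _ hhom 0 (by rwa [pow_one])
  exact Subtype.ext (sub_eq_zero.1 this)

/-- Harmonic decomposition step: any homogeneous polynomial of degree `a ≥ 2` differs from a
harmonic one by `r² ·` (a homogeneous polynomial of degree `a - 2`). -/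
lemma exists_harmonic_decomp (hn : 1 ≤ n) {a : ℕ} (ha : 2 ≤ a)
    {p : MvPolynomial (Fin n) ℝ} (hp : p.IsHomogeneous a) :
    ∃ h q : MvPolynomial (Fin n) ℝ, h.IsHomogeneous a ∧ lapL n h = 0 ∧
      q.IsHomogeneous (a - 2) ∧ p = h + r2 n * q := by
  have hlap : (lapL n p).IsHomogeneous (a - 2) := lap_isHomogeneous hp
  obtain ⟨qbar, hqbar⟩ := Lop_surjective hn (a - 2)
    ⟨lapL n p, (mem_homogeneousSubmodule _ _).2 hlap⟩
  set q : MvPolynomial (Fin n) ℝ := (qbar : MvPolynomial (Fin n) ℝ) with hqdef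
  have hq : q.IsHomogeneous (a - 2) := (mem_homogeneousSubmodule _ _).1 qbar.2
  have hLq : lapL n (r2 n * q) = lapL n p := by
    have := congrArg (fun x : homogeneousSubmodule (Fin n) ℝ (a-2) =>
      (x : MvPolynomial (Fin n) ℝ)) hqbar
    simpa [Lop] using this
  refine ⟨p - r2 n * q, q, ?_, ?_, hq, by ring⟩
  · have h2 : (r2 n * q).IsHomogeneous a := by
      have := isHomogeneous_r2.mul hq
      rwa [show 2 + (a - 2) = a by omega] at this
    exact hp.sub h2
  · rw [map_sub, hLq, sub_self]

open MeasureTheory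

/-- Lipschitz bound for `Real.sqrt` away from `0`. -/
lemma sqrt_diff_le {c a b : ℝ} (hc : 0 < c) (ha : c ≤ a) (hb : c ≤ b) :
    |Real.sqrt a - Real.sqrt b| ≤ (Real.sqrt c)⁻¹ * |a - b| := by
  have ha0 : (0:ℝ) ≤ a := le_trans hc.le ha
  have hb0 : (0:ℝ) ≤ b := le_trans hc.le hb
  have hsum : Real.sqrt c ≤ Real.sqrt a + Real.sqrt b :=
    le_trans (Real.sqrt_le_sqrt ha) (le_add_of_nonneg_right (Real.sqrt_nonneg b))
  have hcpos : 0 < Real.sqrt c := Real.sqrt_pos.2 hc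
  have hspos : 0 < Real.sqrt a + Real.sqrt b := lt_of_lt_of_le hcpos hsum
  have hkey : |Real.sqrt a - Real.sqrt b| * (Real.sqrt a + Real.sqrt b) = |a - b| := by
    rw [← abs_of_pos hspos, ← abs_mul]
    congr 1
    rw [mul_comm]
    rw [add_mul, mul_sub, mul_sub]
    rw [Real.mul_self_sqrt ha0, Real.mul_self_sqrt hb0]
    ring
  rw [← hkey]
  rw [mul_comm ((Real.sqrt c)⁻¹) _, mul_assoc]
  have h2 : (1:ℝ) ≤ (Real.sqrt a + Real.sqrt b) * (Real.sqrt c)⁻¹ := by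
    rw [← div_eq_mul_inv, le_div_iff₀ hcpos, one_mul]
    exact hsum
  nlinarith [abs_nonneg (Real.sqrt a - Real.sqrt b)]

lemma isFiniteMeasure_sphereMeasureAux (m : ℕ) :
    Measure.hausdorffMeasure (((m+1 : ℕ) : ℝ) - 1)
      {x : EuclideanSpace ℝ (Fin (m+1)) | ‖x‖ = 1} < ⊤ := by
  set N : ℕ := m + 1 with hN
  have hNpos : (0:ℝ) < N := by positivity
  set sgn : Bool → ℝ := fun b => if b then 1 else (-1) with hsgn
  have habs_sgn : ∀ b, |sgn b| = 1 := by intro b; cases b <;> simp [hsgn]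
  set Q : (Fin m → ℝ) → ℝ := fun y => ∑ j, (y j)^2 with hQ
  set s : (Fin m → ℝ) → ℝ := fun y => Real.sqrt (1 - Q y) with hs
  set f : Fin N × Bool → (Fin m → ℝ) → EuclideanSpace ℝ (Fin N) :=
    fun p y => (WithLp.toLp 2 (Fin.insertNth p.1 (sgn p.2 * s y) y) : EuclideanSpace ℝ (Fin N)) with hf
  set K : Set (Fin m → ℝ) := {y | Q y ≤ 1 - (N:ℝ)⁻¹} with hK
  have hNinv : (0:ℝ) < (N:ℝ)⁻¹ := by positivity
  -- bounds on K
  have hyabs : ∀ y ∈ K, ∀ j, |y j| ≤ 1 := by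
    intro y hy j
    rw [← sq_le_one_iff_abs_le_one]
    have h1 : (y j)^2 ≤ Q y := by
      rw [hQ]
      exact Finset.single_le_sum (fun j _ => sq_nonneg (y j)) (Finset.mem_univ j)
    have := hy
    rw [hK, Set.mem_setOf_eq] at this
    nlinarith
  have hQdiff : ∀ y ∈ K, ∀ y' ∈ K, |Q y - Q y'| ≤ (2*m) * dist y y' := by
    intro y hy y' hy'
    rw [hQ]
    simp only
    rw [← Finset.sum_sub_distrib]
    refine le_trans (Finset.abs_sum_le_sum_abs _ _) ?_
    have hterm : ∀ j : Fin m, |y j ^ 2 - y' j ^ 2| ≤ 2 * dist y y' := by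
      intro j
      have h1 : y j ^2 - y' j ^2 = (y j + y' j) * (y j - y' j) := by ring
      rw [h1, abs_mul]
      have h2 : |y j + y' j| ≤ 2 := by
        have := abs_add_le (y j) (y' j)
        have := hyabs y hy j
        have := hyabs y' hy' j
        linarith
      have h3 : |y j - y' j| ≤ dist y y' := by
        rw [← Real.dist_eq]
        exact dist_le_pi_dist y y' j
      have h4 : (0:ℝ) ≤ |y j - y' j| := abs_nonneg _
      nlinarith
    refine le_trans (Finset.sum_le_sum (fun j _ => hterm j)) ?_
    rw [Finset.sum_const, Finset.card_univ, Fintype.card_fin, nsmul_eq_mul]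
    ring_nf
    rfl
  have hsdiff : ∀ y ∈ K, ∀ y' ∈ K, |s y - s y'| ≤ (Real.sqrt N * (2*m)) * dist y y' := by
    intro y hy y' hy'
    rw [hs]
    simp only
    have h1 : (N:ℝ)⁻¹ ≤ 1 - Q y := by
      have := hy; rw [hK, Set.mem_setOf_eq] at this; linarith
    have h2 : (N:ℝ)⁻¹ ≤ 1 - Q y' := by
      have := hy'; rw [hK, Set.mem_setOf_eq] at this; linarith
    have h3 := sqrt_diff_le hNinv h1 h2
    have h4 : |1 - Q y - (1 - Q y')| = |Q y - Q y'| := by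
      rw [show (1 - Q y - (1 - Q y')) = -(Q y - Q y') by ring, abs_neg]
    rw [h4] at h3
    have h5 : (Real.sqrt ((N:ℝ)⁻¹))⁻¹ = Real.sqrt N := by
      rw [Real.sqrt_inv, inv_inv]
    rw [h5] at h3
    refine le_trans h3 ?_
    have h6 := hQdiff y hy y' hy'
    have h7 : (0:ℝ) ≤ Real.sqrt N := Real.sqrt_nonneg _
    calc Real.sqrt N * |Q y - Q y'| ≤ Real.sqrt N * ((2*m) * dist y y') := by
          exact mul_le_mul_of_nonneg_left h6 h7
    _ = (Real.sqrt N * (2*m)) * dist y y' := by ring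
  -- the Lipschitz constant
  set Creal : ℝ := Real.sqrt (m + (Real.sqrt N * (2*m))^2) with hCreal
  have hCreal0 : 0 ≤ Creal := Real.sqrt_nonneg _
  set C : NNReal := Real.toNNReal Creal with hC
  have hlip : ∀ p : Fin N × Bool, LipschitzOnWith C (f p) K := by
    intro p
    apply LipschitzOnWith.of_dist_le_mul
    intro y hy y' hy'
    have hD0 : 0 ≤ dist y y' := dist_nonneg
    rw [EuclideanSpace.dist_eq]
    rw [Fin.sum_univ_succAbove (fun i => dist (f p y i) (f p y' i) ^ 2) p.1]
    have hcoord1 : dist (f p y p.1) (f p y' p.1) = |s y - s y'| := by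
      rw [hf]
      simp only [PiLp.toLp_apply, Fin.insertNth_apply_same]
      rw [Real.dist_eq, show sgn p.2 * s y - sgn p.2 * s y' = sgn p.2 * (s y - s y') by ring,
        abs_mul, habs_sgn, one_mul]
    have hcoord2 : ∀ j : Fin m, dist (f p y (p.1.succAbove j)) (f p y' (p.1.succAbove j))
        = |y j - y' j| := by
      intro j
      rw [hf]
      simp only [PiLp.toLp_apply, Fin.insertNth_apply_succAbove]
      rw [Real.dist_eq]
    rw [hcoord1]
    rw [Finset.sum_congr rfl (fun j _ => by rw [hcoord2 j])]
    have hsumb : ∑ j : Fin m, |y j - y' j| ^ 2 ≤ (m : ℝ) * dist y y' ^ 2 := by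
      have : ∀ j : Fin m, |y j - y' j| ^ 2 ≤ dist y y' ^2 := by
        intro j
        have h3 : |y j - y' j| ≤ dist y y' := by
          rw [← Real.dist_eq]; exact dist_le_pi_dist y y' j
        nlinarith [abs_nonneg (y j - y' j)]
      refine le_trans (Finset.sum_le_sum (fun j _ => this j)) ?_
      rw [Finset.sum_const, Finset.card_univ, Fintype.card_fin, nsmul_eq_mul]
    have hsq : |s y - s y'|^2 ≤ (Real.sqrt N * (2*m))^2 * dist y y' ^2 := by
      have := hsdiff y hy y' hy'
      nlinarith [abs_nonneg (s y - s y'), mul_nonneg (mul_nonneg (Real.sqrt_nonneg (N:ℝ)) (by positivity : (0:ℝ) ≤ 2*m)) hD0]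
    have htot : |s y - s y'|^2 + ∑ j : Fin m, |y j - y' j| ^ 2
        ≤ (m + (Real.sqrt N * (2*m))^2) * dist y y' ^ 2 := by nlinarith
    refine le_trans (Real.sqrt_le_sqrt htot) ?_
    rw [show (m + (Real.sqrt N * (2*m))^2) * dist y y' ^ 2
        = (m + (Real.sqrt N * (2*m))^2) * (dist y y') ^ 2 from rfl]
    rw [Real.sqrt_mul (by positivity) _, Real.sqrt_sq hD0]
    have : (C : ℝ) = Creal := by
      rw [hC, Real.coe_toNNReal _ hCreal0]
    rw [this, hCreal]
  -- the covering
  have hcov : {x : EuclideanSpace ℝ (Fin N) | ‖x‖ = 1} ⊆ ⋃ p : Fin N × Bool, f p '' K := by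
    intro x hx
    rw [Set.mem_setOf_eq] at hx
    have hx2 : ∑ i, (x i)^2 = 1 := by
      have h1 := EuclideanSpace.norm_eq x
      rw [hx] at h1
      have h2 : ∑ i, ‖x i‖^2 = ∑ i, (x i)^2 := by
        refine Finset.sum_congr rfl fun i _ => by rw [Real.norm_eq_abs, sq_abs]
      rw [h2] at h1
      exact Real.sqrt_eq_one.1 h1.symm
    have hex : ∃ i, (N:ℝ)⁻¹ ≤ (x i)^2 := by
      by_contra hcon
      push_neg at hcon
      have : ∑ i, (x i)^2 < ∑ _i : Fin N, (N:ℝ)⁻¹ :=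
        Finset.sum_lt_sum_of_nonempty Finset.univ_nonempty (fun i _ => hcon i)
      rw [Finset.sum_const, Finset.card_univ, Fintype.card_fin, nsmul_eq_mul] at this
      rw [hx2, mul_inv_cancel₀ (ne_of_gt hNpos)] at this
      exact lt_irrefl _ this
    obtain ⟨i, hi⟩ := hex
    set b : Bool := decide (0 ≤ x i) with hb
    set y : Fin m → ℝ := fun j => x (i.succAbove j) with hy
    have hQy : Q y = 1 - (x i)^2 := by
      rw [hQ]
      have := Fin.sum_univ_succAbove (fun i' => (x i')^2) i
      rw [hx2] at this
      simp only [hy]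
      linarith [this]
    have hyK : y ∈ K := by
      rw [hK, Set.mem_setOf_eq, hQy]
      linarith
    refine Set.mem_iUnion.2 ⟨(i, b), ⟨y, hyK, ?_⟩⟩
    have hsy : s y = |x i| := by
      rw [hs]
      simp only [hQy]
      rw [show (1 - (1 - (x i)^2)) = (x i)^2 by ring, Real.sqrt_sq_eq_abs]
    ext j
    refine Fin.succAboveCases i ?_ ?_ j
    · show (Fin.insertNth i (sgn b * s y) y : Fin N → ℝ) i = x i
      rw [Fin.insertNth_apply_same, hsy]
      by_cases hxi : 0 ≤ x i
      · have : b = true := by rw [hb]; simp [hxi]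
        rw [this]
        simp only [hsgn, if_true]
        rw [abs_of_nonneg hxi, one_mul]
      · have : b = false := by rw [hb]; simp [hxi]
        rw [this]
        simp only [hsgn, if_false]
        push_neg at hxi
        rw [abs_of_neg hxi]
        norm_num
    · intro j'
      show (Fin.insertNth i (sgn b * s y) y : Fin N → ℝ) (i.succAbove j') = x (i.succAbove j')
      rw [Fin.insertNth_apply_succAbove]
  -- putting it together
  have hd0 : (0:ℝ) ≤ ((N:ℕ):ℝ) - 1 := by
    have : (1:ℝ) ≤ (N:ℝ) := by exact_mod_cast Nat.one_le_iff_ne_zero.2 (by omega)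
    linarith
  calc Measure.hausdorffMeasure (((N:ℕ):ℝ) - 1) {x : EuclideanSpace ℝ (Fin N) | ‖x‖ = 1}
      ≤ Measure.hausdorffMeasure (((N:ℕ):ℝ) - 1) (⋃ p : Fin N × Bool, f p '' K) :=
        measure_mono hcov
    _ ≤ ∑' p : Fin N × Bool, Measure.hausdorffMeasure (((N:ℕ):ℝ) - 1) (f p '' K) :=
        measure_iUnion_le _
    _ < ⊤ := by
        rw [tsum_fintype]
        refine ENNReal.sum_lt_top.2 fun p _ => ?_
        refine lt_of_le_of_lt ((hlip p).hausdorffMeasure_image_le hd0) ?_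
        have hKm : Measure.hausdorffMeasure (((N:ℕ):ℝ) - 1) (K : Set (Fin m → ℝ))
            < ⊤ := by
          have hcast : ((N:ℕ):ℝ) - 1 = ((Fintype.card (Fin m) : ℕ) : ℝ) := by
            rw [Fintype.card_fin]
            rw [hN]
            push_cast
            ring
          rw [hcast, MeasureTheory.hausdorffMeasure_pi_real]
          have hKsub : K ⊆ Metric.closedBall (0 : Fin m → ℝ) 1 := by
            intro y hyK
            rw [Metric.mem_closedBall, dist_zero_right]
            rw [pi_norm_le_iff_of_nonneg zero_le_one]
            intro j
            rw [Real.norm_eq_abs]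
            exact hyabs y hyK j
          exact lt_of_le_of_lt (measure_mono hKsub)
            ((isCompact_closedBall _ _).measure_lt_top)
        exact ENNReal.mul_lt_top (ENNReal.rpow_lt_top_of_nonneg hd0 ENNReal.coe_ne_top)
          hKm

lemma isFiniteMeasure_sphereMeasure (n : ℕ) (hn : 1 ≤ n) :
    IsFiniteMeasure (sphereMeasure n) := by
  obtain ⟨m, rfl⟩ : ∃ m, n = m + 1 := ⟨n - 1, by omega⟩
  constructor
  rw [sphereMeasure, Measure.restrict_apply_univ]
  exact isFiniteMeasure_sphereMeasureAux m

lemma measurableSet_sphereSet (n : ℕ) :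
    MeasurableSet {x : EuclideanSpace ℝ (Fin n) | ‖x‖ = 1} :=
  (isClosed_eq continuous_norm continuous_const).measurableSet

lemma ae_norm_one (n : ℕ) : ∀ᵐ x ∂(sphereMeasure n), ‖x‖ = 1 :=
  ae_restrict_mem (measurableSet_sphereSet n)

/-- Evaluation of a polynomial as a function on Euclidean space. -/
noncomputable def F (p : MvPolynomial (Fin n) ℝ) : EuclideanSpace ℝ (Fin n) → ℝ :=
  fun x => eval (fun i => x i) p

lemma continuous_F (p : MvPolynomial (Fin n) ℝ) : Continuous (F p) := by
  have h1 : Continuous fun v : Fin n → ℝ => eval v p := MvPolynomial.continuous_eval p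
  exact h1.comp (PiLp.continuous_ofLp 2 (fun _ : Fin n => ℝ))

lemma F_add (p q : MvPolynomial (Fin n) ℝ) : F (p + q) = F p + F q := by
  funext x; simp [F]

lemma F_smul (c : ℝ) (p : MvPolynomial (Fin n) ℝ) : F (c • p) = c • F p := by
  funext x; simp [F, smul_eval]

lemma sum_sq_eq_one {n : ℕ} {x : EuclideanSpace ℝ (Fin n)} (hx : ‖x‖ = 1) :
    ∑ i, (x i)^2 = 1 := by
  have h1 := EuclideanSpace.norm_eq x
  rw [hx] at h1
  have h2 : ∑ i, ‖x i‖^2 = ∑ i, (x i)^2 :=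
    Finset.sum_congr rfl fun i _ => by rw [Real.norm_eq_abs, sq_abs]
  rw [h2] at h1
  exact Real.sqrt_eq_one.1 h1.symm

lemma F_r2_eq_one {n : ℕ} {x : EuclideanSpace ℝ (Fin n)} (hx : ‖x‖ = 1) :
    eval (fun i => x i) (r2 n) = 1 := by
  rw [r2, map_sum]
  have : ∀ i : Fin n, eval (fun i => x i) (X i ^ 2) = (x i)^2 := by
    intro i; rw [map_pow, eval_X]
  rw [Finset.sum_congr rfl fun i _ => this i]
  exact sum_sq_eq_one hx

lemma memℒp_F [IsFiniteMeasure (sphereMeasure n)] (p : MvPolynomial (Fin n) ℝ) :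
    MemLp (F p) 2 (sphereMeasure n) := by
  obtain ⟨Cb, hCb⟩ := (isCompact_sphere (0 : EuclideanSpace ℝ (Fin n)) 1).exists_bound_of_continuousOn
    (continuous_F p).continuousOn
  refine MemLp.of_bound (continuous_F p).aestronglyMeasurable Cb ?_
  filter_upwards [ae_norm_one n] with x hx
  exact hCb x (by rwa [mem_sphere_zero_iff_norm])

/-- The linear map sending a polynomial to its `L²` class on the sphere. -/
noncomputable def T (n : ℕ) [IsFiniteMeasure (sphereMeasure n)] :
    MvPolynomial (Fin n) ℝ →ₗ[ℝ] Lp ℝ 2 (sphereMeasure n) where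
  toFun p := (memℒp_F p).toLp (F p)
  map_add' p q := by
    show (memℒp_F (p+q)).toLp (F (p+q)) = (memℒp_F p).toLp (F p) + (memℒp_F q).toLp (F q)
    rw [show (memℒp_F (p+q)).toLp (F (p+q)) = ((memℒp_F p).add (memℒp_F q)).toLp (F p + F q) from
      MemLp.toLp_congr _ _ (by rw [F_add p q])]
    exact MemLp.toLp_add _ _
  map_smul' c p := by
    show (memℒp_F (c • p)).toLp (F (c • p)) = c • (memℒp_F p).toLp (F p)
    rw [show (memℒp_F (c • p)).toLp (F (c • p)) = ((memℒp_F p).const_smul c).toLp (c • F p) from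
      MemLp.toLp_congr _ _ (by rw [F_smul c p])]
    exact MemLp.toLp_const_smul c _

/-- The generating set of harmonic homogeneous polynomial classes. -/
noncomputable def genSet (n : ℕ) : Set (Lp ℝ 2 (sphereMeasure n)) :=
  {f : Lp ℝ 2 (sphereMeasure n) |
    ∃ (a : ℕ) (p : MvPolynomial (Fin n) ℝ),
      p ∈ homogeneousSubmodule (Fin n) ℝ a ∧
      (∑ i, pderiv i (pderiv i p)) = 0 ∧
      ∀ᵐ x ∂(sphereMeasure n),
        (f : EuclideanSpace ℝ (Fin n) → ℝ) x =
          MvPolynomial.eval (fun i => x i) p}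

lemma T_mem_span_of_isHomogeneous (n : ℕ) [IsFiniteMeasure (sphereMeasure n)] (hn : 1 ≤ n) :
    ∀ (a : ℕ) (p : MvPolynomial (Fin n) ℝ), p.IsHomogeneous a →
      T n p ∈ Submodule.span ℝ (genSet n) := by
  intro a
  induction a using Nat.strong_induction_on with
  | _ a IH =>
    intro p hp
    by_cases hlap : lapL n p = 0
    · apply Submodule.subset_span
      refine ⟨a, p, (mem_homogeneousSubmodule _ _).2 hp, by rw [← lapL_apply]; exact hlap, ?_⟩
      filter_upwards [MemLp.coeFn_toLp (memℒp_F p)] with x hx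
      exact hx
    · have ha : 2 ≤ a := by
        by_contra hcon
        exact hlap (lap_eq_zero_of_le_one hp (by omega))
      obtain ⟨h, q, hh, hlaph, hq, hpq⟩ := exists_harmonic_decomp hn ha hp
      have hTrq : T n (r2 n * q) = T n q := by
        show (memℒp_F (r2 n * q)).toLp (F (r2 n * q)) = (memℒp_F q).toLp (F q)
        refine MemLp.toLp_congr _ _ ?_
        filter_upwards [ae_norm_one n] with x hx
        show eval _ (r2 n * q) = _
        rw [map_mul, F_r2_eq_one hx, one_mul]
        rfl
      have hTp : T n p = T n h + T n q := by
        rw [hpq, map_add, hTrq]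
      rw [hTp]
      refine Submodule.add_mem _ ?_ (IH (a - 2) (by omega) q hq)
      apply Submodule.subset_span
      refine ⟨a, h, (mem_homogeneousSubmodule _ _).2 hh, by rw [← lapL_apply]; exact hlaph, ?_⟩
      filter_upwards [MemLp.coeFn_toLp (memℒp_F h)] with x hx
      exact hx

lemma T_mem_span (n : ℕ) [IsFiniteMeasure (sphereMeasure n)] (hn : 1 ≤ n)
    (p : MvPolynomial (Fin n) ℝ) : T n p ∈ Submodule.span ℝ (genSet n) := by
  have hdecomp := congrArg (T n) (sum_homogeneousComponent p)
  rw [map_sum] at hdecomp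
  rw [← hdecomp]
  exact Submodule.sum_mem _ fun i _ =>
    T_mem_span_of_isHomogeneous n hn i _ (homogeneousComponent_isHomogeneous i p)

/-- The coordinate functions on the sphere, as continuous maps. -/
noncomputable def coordCM (n : ℕ) (i : Fin n) :
    C(Metric.sphere (0 : EuclideanSpace ℝ (Fin n)) 1, ℝ) :=
  ⟨fun z => (z : EuclideanSpace ℝ (Fin n)) i,
    (continuous_apply i).comp ((PiLp.continuous_ofLp 2 (fun _ : Fin n => ℝ)).comp
      continuous_subtype_val)⟩

/-- Polynomials as continuous functions on the sphere. -/
noncomputable def Phi (n : ℕ) :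
    MvPolynomial (Fin n) ℝ →ₐ[ℝ] C(Metric.sphere (0 : EuclideanSpace ℝ (Fin n)) 1, ℝ) :=
  aeval (coordCM n)

lemma Phi_apply (n : ℕ) (p : MvPolynomial (Fin n) ℝ)
    (z : Metric.sphere (0 : EuclideanSpace ℝ (Fin n)) 1) :
    (Phi n p) z = F p (z : EuclideanSpace ℝ (Fin n)) := by
  have h := DFunLike.congr_fun
    (comp_aeval (R := ℝ) (coordCM n) (ContinuousMap.evalAlgHom ℝ ℝ z)) p
  simp only [AlgHom.coe_comp, Function.comp_apply] at h
  show (ContinuousMap.evalAlgHom ℝ ℝ z) (aeval (coordCM n) p) = _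
  rw [h]
  simp only [F, aeval_def]
  rfl

lemma Phi_range_separates (n : ℕ) :
    (Phi n).range.SeparatesPoints := by
  intro z w hzw
  have hne : (z : EuclideanSpace ℝ (Fin n)) ≠ (w : EuclideanSpace ℝ (Fin n)) :=
    Subtype.coe_injective.ne hzw
  obtain ⟨i, hi⟩ : ∃ i, (z : EuclideanSpace ℝ (Fin n)) i ≠ (w : EuclideanSpace ℝ (Fin n)) i := by
    by_contra hcon
    push_neg at hcon
    exact hne (PiLp.ext hcon)
  refine ⟨⇑(Phi n (X i)), ⟨Phi n (X i), ⟨X i, rfl⟩, rfl⟩, ?_⟩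
  show (Phi n (X i)) z ≠ (Phi n (X i)) w
  rw [Phi_apply, Phi_apply]
  simpa [F] using hi

end SphereHarmAux


open SphereHarmAux

/-- The linear span of (classes of) restrictions to the unit sphere of harmonic homogeneous
polynomials is dense in `L²(S, μ)`, where `μ` is the `(n−1)`-dimensional Hausdorff measure on
the sphere `S = S^{n-1}`. -/
theorem span_harmonic_dense_in_L2_sphere (n : ℕ) (hn : 1 ≤ n) :
    Dense ((Submodule.span ℝ
      {f : Lp ℝ 2 (sphereMeasure n) |
        ∃ (a : ℕ) (p : MvPolynomial (Fin n) ℝ),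
          p ∈ homogeneousSubmodule (Fin n) ℝ a ∧
          (∑ i, pderiv i (pderiv i p)) = 0 ∧
          ∀ᵐ x ∂(sphereMeasure n),
            (f : EuclideanSpace ℝ (Fin n) → ℝ) x =
              MvPolynomial.eval (fun i => x i) p} :
      Set (Lp ℝ 2 (sphereMeasure n)))) := by
  classical
  haveI : IsFiniteMeasure (sphereMeasure n) := isFiniteMeasure_sphereMeasure n hn
  haveI : Fact ((1:ENNReal) ≤ 2) := ⟨one_le_two⟩
  show Dense ((Submodule.span ℝ (genSet n) : Submodule ℝ (Lp ℝ 2 (sphereMeasure n))) : Set (Lp ℝ 2 (sphereMeasure n)))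
  set V := Submodule.span ℝ (genSet n) with hV
  have hdr : DenseRange (BoundedContinuousFunction.toLp (E := ℝ) 2 (sphereMeasure n) ℝ) :=
    BoundedContinuousFunction.toLp_denseRange ℝ (sphereMeasure n) ℝ (by norm_num)
  have hsub : Set.range (BoundedContinuousFunction.toLp (E := ℝ) 2 (sphereMeasure n) ℝ)
      ⊆ closure (V : Set (Lp ℝ 2 (sphereMeasure n))) := by
    rintro _ ⟨g, rfl⟩
    rw [Metric.mem_closure_iff]
    intro ε hε
    set M : ENNReal := (sphereMeasure n) Set.univ ^ (2:ENNReal).toReal⁻¹ with hM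
    have hMne : M ≠ ⊤ :=
      (ENNReal.rpow_lt_top_of_nonneg (by norm_num) (measure_ne_top _ _)).ne
    set Mt : ℝ := M.toReal with hMt
    have hMt0 : 0 ≤ Mt := ENNReal.toReal_nonneg
    set εc : ℝ := ε / (Mt + 1) with hεc
    have hεc0 : 0 < εc := by positivity
    set g' : C(Metric.sphere (0 : EuclideanSpace ℝ (Fin n)) 1, ℝ) :=
      ⟨fun z => g (z : EuclideanSpace ℝ (Fin n)),
        g.continuous.comp continuous_subtype_val⟩ with hg'
    have htop := ContinuousMap.subalgebra_topologicalClosure_eq_top_of_separatesPoints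
      (Phi n).range (Phi_range_separates n)
    have hg'cl : g' ∈ closure (((Phi n).range : Subalgebra ℝ _) :
        Set C(Metric.sphere (0 : EuclideanSpace ℝ (Fin n)) 1, ℝ)) := by
      have hmem : g' ∈ ((Phi n).range.topologicalClosure : Subalgebra ℝ _) := by
        rw [htop]; trivial
      exact hmem
    obtain ⟨amap, hamem, hadist⟩ := Metric.mem_closure_iff.1 hg'cl εc hεc0
    obtain ⟨p', rfl⟩ := hamem
    have hbd : ∀ᵐ x ∂(sphereMeasure n), ‖(⇑g - F p') x‖ ≤ εc := by
      filter_upwards [ae_norm_one n] with x hx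
      have hxz : x ∈ Metric.sphere (0 : EuclideanSpace ℝ (Fin n)) 1 := by
        rwa [mem_sphere_zero_iff_norm]
      have h1 : (⇑g - F p') x =
          g' (⟨x, hxz⟩ : Metric.sphere (0 : EuclideanSpace ℝ (Fin n)) 1)
            - (Phi n p') ⟨x, hxz⟩ := by
        rw [Phi_apply]
        rfl
      rw [h1, Real.norm_eq_abs, ← Real.dist_eq]
      exact le_of_lt (lt_of_le_of_lt (ContinuousMap.dist_apply_le_dist _) hadist)
    refine ⟨T n p', T_mem_span n hn p', ?_⟩
    have hcoe1 := BoundedContinuousFunction.coeFn_toLp 2 (sphereMeasure n) ℝ g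
    have hcoe2 := MemLp.coeFn_toLp (memℒp_F p')
    have hdiff : (↑(BoundedContinuousFunction.toLp 2 (sphereMeasure n) ℝ g - T n p') :
        EuclideanSpace ℝ (Fin n) → ℝ) =ᵐ[sphereMeasure n] ⇑g - F p' :=
      (Lp.coeFn_sub _ _).trans (hcoe1.sub hcoe2)
    rw [dist_eq_norm, Lp.norm_def, eLpNorm_congr_ae hdiff]
    have hle := eLpNorm_le_of_ae_bound (p := 2) (μ := sphereMeasure n) hbd
    have h3 := ENNReal.toReal_mono (ENNReal.mul_ne_top hMne ENNReal.ofReal_ne_top) hle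
    have h2 : ((sphereMeasure n) Set.univ ^ (2:ENNReal).toReal⁻¹ * ENNReal.ofReal εc).toReal
        = Mt * εc := by
      rw [ENNReal.toReal_mul, ENNReal.toReal_ofReal hεc0.le]
    rw [h2] at h3
    refine lt_of_le_of_lt h3 ?_
    have h4 : Mt / (Mt + 1) < 1 := (div_lt_one (by positivity)).2 (by linarith)
    calc Mt * εc = (Mt / (Mt + 1)) * ε := by rw [hεc]; ring
    _ < 1 * ε := mul_lt_mul_of_pos_right h4 hε
    _ = ε := one_mul ε
  have hclose : closure (V : Set (Lp ℝ 2 (sphereMeasure n))) = Set.univ := by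
    apply Set.eq_univ_of_univ_subset
    calc Set.univ
        = closure (Set.range (BoundedContinuousFunction.toLp (E := ℝ) 2 (sphereMeasure n) ℝ)) :=
          hdr.closure_range.symm
      _ ⊆ closure (closure (V : Set (Lp ℝ 2 (sphereMeasure n)))) := closure_mono hsub
      _ = closure (V : Set (Lp ℝ 2 (sphereMeasure n))) := closure_closure
  rw [dense_iff_closure_eq]
  exact hclose
end

section
/- Let n ≥ 1 be a natural number and let p ∈ MvPolynomial (Fin n) ℝ be harmonic (Δp = 0). If MvPolynomial.eval x p = 0 for every x : Fin n → ℝ with ∑ i, (x i)^2 = 1, then p = 0. -/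
open MvPolynomial

namespace SphereAux

noncomputable section

variable {n : ℕ}

def r2 (n : ℕ) : MvPolynomial (Fin n) ℝ := ∑ i, X i ^ 2

def lap (f : MvPolynomial (Fin n) ℝ) : MvPolynomial (Fin n) ℝ := ∑ i, pderiv i (pderiv i f)

def eul (f : MvPolynomial (Fin n) ℝ) : MvPolynomial (Fin n) ℝ := ∑ i, X i * pderiv i f

lemma lap_add (f g : MvPolynomial (Fin n) ℝ) : lap (f + g) = lap f + lap g := by
  simp [lap, Finset.sum_add_distrib]

lemma eul_add (f g : MvPolynomial (Fin n) ℝ) : eul (f + g) = eul f + eul g := by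
  simp [eul, mul_add, Finset.sum_add_distrib]

lemma pderiv_r2 (i : Fin n) : pderiv i (r2 n) = 2 * X i := by
  classical
  simp only [r2, map_sum, pderiv_pow, pderiv_X, Pi.single_apply]
  rw [Finset.sum_eq_single i] <;> simp +contextual [eq_comm]

lemma X_mul_monomial (i : Fin n) (s : Fin n →₀ ℕ) (a : ℝ) :
    X i * monomial s a = monomial (Finsupp.single i 1 + s) a := by
  rw [X, monomial_mul, one_mul]

lemma degree_eq_sum (s : Fin n →₀ ℕ) : s.degree = ∑ i, s i := by
  rw [Finsupp.degree_apply, Finset.sum_subset (Finset.subset_univ s.support)]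
  intro x _ hx
  simp [Finsupp.notMem_support_iff.mp hx]

lemma eul_monomial (s : Fin n →₀ ℕ) (a : ℝ) :
    eul (monomial s a) = monomial s (a * (s.degree : ℝ)) := by
  classical
  have key : ∀ i : Fin n, X i * pderiv i (monomial s a) = monomial s (a * (s i : ℝ)) := by
    intro i
    rw [pderiv_monomial]
    rcases Nat.eq_zero_or_pos (s i) with h | h
    · simp [h]
    · rw [X_mul_monomial, add_tsub_cancel_of_le (Finsupp.single_le_iff.mpr h)]
  rw [eul]
  simp only [key]
  rw [← map_sum (monomial s), ← Finset.mul_sum, degree_eq_sum]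
  push_cast
  ring_nf

end

end SphereAux

namespace SphereAux

noncomputable section

variable {n : ℕ}

lemma hc_monomial (k : ℕ) (s : Fin n →₀ ℕ) (a : ℝ) :
    homogeneousComponent k (monomial s a) =
      if s.degree = k then monomial s a else 0 := by
  have h : (monomial s a) ∈ homogeneousSubmodule (Fin n) ℝ s.degree :=
    (mem_homogeneousSubmodule ..).mpr (isHomogeneous_monomial a rfl)
  rw [homogeneousComponent_of_mem h]
  simp [eq_comm]

lemma degree_add (s t : Fin n →₀ ℕ) : (s + t).degree = s.degree + t.degree := by
  simp [degree_eq_sum, Finset.sum_add_distrib]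

lemma degree_single_one (i : Fin n) : (Finsupp.single i 1).degree = 1 := by
  simp [degree_eq_sum, Finsupp.single_apply]

lemma hc_pderiv (k : ℕ) (i : Fin n) (f : MvPolynomial (Fin n) ℝ) :
    homogeneousComponent k (pderiv i f) = pderiv i (homogeneousComponent (k + 1) f) := by
  classical
  induction f using MvPolynomial.induction_on' with
  | add p q hp hq => simp [map_add, hp, hq]
  | monomial s a =>
    rw [pderiv_monomial, hc_monomial, hc_monomial]
    rcases Nat.eq_zero_or_pos (s i) with h | h
    · have h2 : pderiv i (if s.degree = k + 1 then monomial s a else 0) = 0 := by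
        split <;> simp [pderiv_monomial, h]
      simp [h, h2]
    · have hs : Finsupp.single i 1 + (s - Finsupp.single i 1) = s :=
        add_tsub_cancel_of_le (Finsupp.single_le_iff.mpr h)
      have hdeg : s.degree = (s - Finsupp.single i 1).degree + 1 := by
        conv_lhs => rw [← hs]
        rw [degree_add, degree_single_one]; ring
      rw [hdeg]
      by_cases hk : (s - Finsupp.single i 1).degree = k
      · simp [hk, pderiv_monomial]
      · simp only [hk, if_neg, if_neg (by omega : ¬((s - Finsupp.single i 1).degree + 1 = k + 1))]
        simp [map_zero]

lemma hc_lap (k : ℕ) (f : MvPolynomial (Fin n) ℝ) :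
    homogeneousComponent k (lap f) = lap (homogeneousComponent (k + 2) f) := by
  rw [lap, lap, map_sum]
  refine Finset.sum_congr rfl fun i _ => ?_
  rw [hc_pderiv, hc_pderiv]

lemma hc_eul (k : ℕ) (f : MvPolynomial (Fin n) ℝ) :
    homogeneousComponent k (eul f) = eul (homogeneousComponent k f) := by
  classical
  induction f using MvPolynomial.induction_on' with
  | add p q hp hq => simp [eul_add, map_add, hp, hq]
  | monomial s a =>
    rw [eul_monomial, hc_monomial, hc_monomial]
    by_cases hk : s.degree = k
    · simp [hk, eul_monomial]
    · simp [hk, eul, map_zero]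

lemma hc_r2_mul (k : ℕ) (f : MvPolynomial (Fin n) ℝ) :
    homogeneousComponent (k + 2) (r2 n * f) = r2 n * homogeneousComponent k f := by
  classical
  induction f using MvPolynomial.induction_on' with
  | add p q hp hq => simp [mul_add, map_add, hp, hq]
  | monomial s a =>
    rw [hc_monomial, r2, Finset.sum_mul, Finset.sum_mul, map_sum]
    refine Finset.sum_congr rfl fun i _ => ?_
    have : X (R := ℝ) i ^ 2 * monomial s a = monomial (Finsupp.single i 2 + s) a := by
      rw [X, monomial_pow, one_pow, monomial_mul, one_mul, Finsupp.smul_single]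
      norm_num
    rw [this, hc_monomial]
    have hdeg : (Finsupp.single i 2 + s).degree = s.degree + 2 := by
      rw [degree_add]
      have : (Finsupp.single i 2).degree = 2 := by simp [degree_eq_sum, Finsupp.single_apply]
      omega
    by_cases hk : s.degree = k
    · simp [hdeg, hk, this]
    · rw [if_neg (by omega), if_neg hk, mul_zero]

lemma hc_r2_mul_small (k : ℕ) (hk : k < 2) (f : MvPolynomial (Fin n) ℝ) :
    homogeneousComponent k (r2 n * f) = 0 := by
  classical
  induction f using MvPolynomial.induction_on' with
  | add p q hp hq => simp [mul_add, map_add, hp, hq]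
  | monomial s a =>
    rw [r2, Finset.sum_mul, map_sum]
    refine Finset.sum_eq_zero fun i _ => ?_
    have : X (R := ℝ) i ^ 2 * monomial s a = monomial (Finsupp.single i 2 + s) a := by
      rw [X, monomial_pow, one_pow, monomial_mul, one_mul, Finsupp.smul_single]
      norm_num
    rw [this, hc_monomial]
    have : (Finsupp.single i 2).degree = 2 := by simp [degree_eq_sum, Finsupp.single_apply]
    rw [if_neg (by rw [degree_add]; omega)]

end

end SphereAux

namespace SphereAux

noncomputable section

variable {n : ℕ}

lemma eul_zero : eul (0 : MvPolynomial (Fin n) ℝ) = 0 := by simp [eul]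

lemma lap_zero : lap (0 : MvPolynomial (Fin n) ℝ) = 0 := by simp [lap]

lemma eul_sum {α : Type*} (s : Finset α) (f : α → MvPolynomial (Fin n) ℝ) :
    eul (∑ x ∈ s, f x) = ∑ x ∈ s, eul (f x) := by
  classical
  induction s using Finset.induction_on with
  | empty => simp [eul_zero]
  | insert _ _ h ih => rw [Finset.sum_insert h, Finset.sum_insert h, eul_add, ih]

lemma euler {d : ℕ} {h : MvPolynomial (Fin n) ℝ} (hh : h.IsHomogeneous d) :
    eul h = C (d : ℝ) * h := by
  conv_lhs => rw [h.as_sum]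
  rw [eul_sum]
  conv_rhs => rw [h.as_sum, Finset.mul_sum]
  refine Finset.sum_congr rfl fun v hv => ?_
  rw [eul_monomial, C_mul_monomial]
  congr 1
  have : v.degree = d := by
    have := hh (mem_support_iff.mp hv)
    rw [Finsupp.degree_eq_weight_one]; exact this
  rw [this, mul_comm]

lemma hc_of_isHomogeneous {d : ℕ} {h : MvPolynomial (Fin n) ℝ} (hh : h.IsHomogeneous d) :
    homogeneousComponent d h = h := by
  rw [homogeneousComponent_of_mem ((mem_homogeneousSubmodule ..).mpr hh), if_pos rfl]

lemma isHomogeneous_lap {e : ℕ} {h : MvPolynomial (Fin n) ℝ} (hh : h.IsHomogeneous (e + 2)) :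
    (lap h).IsHomogeneous e := by
  have : homogeneousComponent e (lap h) = lap h := by
    rw [hc_lap, hc_of_isHomogeneous hh]
  rw [← this]
  exact homogeneousComponent_isHomogeneous _ _

lemma eq_sum_hc (f : MvPolynomial (Fin n) ℝ) :
    f = ∑ i ∈ Finset.range (f.totalDegree + 1), homogeneousComponent i f :=
  (sum_homogeneousComponent f).symm

lemma lap_eq_zero_of_lowdegree {d : ℕ} (hd : d < 2) {h : MvPolynomial (Fin n) ℝ}
    (hh : h.IsHomogeneous d) : lap h = 0 := by
  rw [eq_sum_hc (lap h)]
  refine Finset.sum_eq_zero fun k _ => ?_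
  rw [hc_lap]
  rw [homogeneousComponent_of_mem ((mem_homogeneousSubmodule ..).mpr hh),
    if_neg (by omega), lap_zero]

lemma lap_r2_mul (f : MvPolynomial (Fin n) ℝ) :
    lap (r2 n * f) = C (2 * (n : ℝ)) * f + C 4 * eul f + r2 n * lap f := by
  have h0 : ∀ i : Fin n, pderiv i (2 : MvPolynomial (Fin n) ℝ) = 0 := by
    intro i
    rw [← map_ofNat (C : ℝ →+* MvPolynomial (Fin n) ℝ) 2, pderiv_C]
  have key : ∀ i : Fin n, pderiv i (pderiv i (r2 n * f)) =
      2 * f + 4 * (X i * pderiv i f) + r2 n * pderiv i (pderiv i f) := by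
    intro i
    rw [pderiv_mul, pderiv_r2, map_add, pderiv_mul, pderiv_mul, pderiv_mul, pderiv_r2, h0,
      pderiv_X_self]
    ring
  rw [lap, Finset.sum_congr rfl fun i _ => key i]
  rw [Finset.sum_add_distrib, Finset.sum_add_distrib, Finset.sum_const, ← Finset.mul_sum,
    ← Finset.mul_sum, Finset.card_univ, Fintype.card_fin]
  rw [← eul, ← lap, nsmul_eq_mul,
    show ((n : MvPolynomial (Fin n) ℝ)) = C (n : ℝ) from (map_natCast C n).symm,
    show (C (2 * (n : ℝ)) : MvPolynomial (Fin n) ℝ) = 2 * C (n : ℝ) by rw [map_mul, map_ofNat],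
    show (C (4 : ℝ) : MvPolynomial (Fin n) ℝ) = 4 from map_ofNat C 4]
  ring

lemma r2_ne_zero (hn : 1 ≤ n) : r2 n ≠ 0 := by
  intro h
  have : coeff (Finsupp.single (⟨0, hn⟩ : Fin n) 2) (r2 n) = 1 := by
    rw [r2]
    rw [coeff_sum]
    classical
    rw [Finset.sum_eq_single (⟨0, hn⟩ : Fin n)]
    · rw [X, monomial_pow, one_pow, Finsupp.smul_single, coeff_monomial, if_pos] <;> norm_num
    · intro j _ hj
      rw [X, monomial_pow, one_pow, Finsupp.smul_single, coeff_monomial, if_neg]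
      intro hc
      exact hj (by simpa using (Finsupp.single_left_injective (by norm_num)) hc)
    · simp
  rw [h] at this
  simp at this

lemma key_descent (hn : 1 ≤ n) : ∀ d : ℕ, ∀ c : ℝ, 0 < c →
    ∀ h : MvPolynomial (Fin n) ℝ, h.IsHomogeneous d →
    C c * h = -(r2 n * lap h) → h = 0 := by
  intro d
  induction d using Nat.strong_induction_on with
  | _ d ih =>
    intro c hc h hh heq
    have hcne : (C c : MvPolynomial (Fin n) ℝ) ≠ 0 := by
      simpa using ne_of_gt hc
    rcases lt_or_ge d 2 with hd | hd
    · rw [lap_eq_zero_of_lowdegree hd hh, mul_zero, neg_zero, mul_eq_zero] at heq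
      tauto
    · obtain ⟨e, rfl⟩ : ∃ e, d = e + 2 := ⟨d - 2, by omega⟩
      set h₁ : MvPolynomial (Fin n) ℝ := C (-c⁻¹) * lap h with hh₁
      have hlh : (lap h).IsHomogeneous e := isHomogeneous_lap hh
      have hh₁hom : h₁.IsHomogeneous e := by
        rw [hh₁, ← smul_eq_C_mul]
        exact Submodule.smul_mem (homogeneousSubmodule (Fin n) ℝ e) _
          ((mem_homogeneousSubmodule ..).mpr hlh)
      have hfact : h = r2 n * h₁ := by
        have := congrArg (fun z => C c⁻¹ * z) heq
        rw [← mul_assoc, ← map_mul, inv_mul_cancel₀ (ne_of_gt hc), map_one, one_mul] at this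
        rw [this, hh₁]
        rw [map_neg]
        ring
      have heq2 : r2 n * (C (c + 2 * n + 4 * e) * h₁ + r2 n * lap h₁) = 0 := by
        have expand : lap h = lap (r2 n * h₁) := by rw [← hfact]
        rw [lap_r2_mul, euler hh₁hom] at expand
        have : C c * (r2 n * h₁) = -(r2 n * lap h) := by rw [← hfact]; exact heq
        rw [expand] at this
        rw [show (C (c + 2 * (n:ℝ) + 4 * e) : MvPolynomial (Fin n) ℝ)
            = C c + C (2 * (n:ℝ)) + C 4 * C (e : ℝ) by rw [← map_mul, ← map_add, ← map_add]]
        linear_combination this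
      have hcancel : C (c + 2 * (n:ℝ) + 4 * (e:ℝ)) * h₁ + r2 n * lap h₁ = 0 := by
        rcases mul_eq_zero.mp heq2 with h' | h'
        · exact absurd h' (r2_ne_zero hn)
        · exact h'
      have hpos : (0:ℝ) < c + 2 * n + 4 * e := by positivity
      have h10 : h₁ = 0 := ih e (by omega) _ hpos h₁ hh₁hom (by linear_combination hcancel)
      rw [hfact, h10, mul_zero]

lemma hc_totalDegree_ne_zero {q : MvPolynomial (Fin n) ℝ} (hq : q ≠ 0) :
    homogeneousComponent q.totalDegree q ≠ 0 := by
  classical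
  obtain ⟨m, hm, hdeg⟩ : ∃ m ∈ q.support, (fun s : Fin n →₀ ℕ => s.sum fun _ e => e) m
      = q.totalDegree := by
    obtain ⟨m, hm, h⟩ := Finset.exists_mem_eq_sup q.support
      (support_nonempty.mpr hq) (fun s : Fin n →₀ ℕ => s.sum fun _ e => e)
    exact ⟨m, hm, h.symm⟩
  have hdeg' : m.degree = q.totalDegree := by
    rw [← hdeg]; rfl
  intro h0
  have : coeff m (homogeneousComponent q.totalDegree q) = coeff m q := by
    rw [coeff_homogeneousComponent, if_pos hdeg']
  rw [h0, coeff_zero] at this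
  exact (mem_support_iff.mp hm) this.symm

lemma q_step (hn : 1 ≤ n) (q : MvPolynomial (Fin n) ℝ)
    (heq : C (2 * (n : ℝ)) * q + C 4 * eul q + (r2 n - 1) * lap q = 0) : q = 0 := by
  by_contra hq
  set d := q.totalDegree with hd
  set h := homogeneousComponent d q with hdef
  have hhom : h.IsHomogeneous d := homogeneousComponent_isHomogeneous d q
  have hne : h ≠ 0 := hc_totalDegree_ne_zero hq
  have h0 : homogeneousComponent d (C (2 * (n : ℝ)) * q + C 4 * eul q + (r2 n - 1) * lap q)
      = 0 := by rw [heq, map_zero]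
  have hsplit : (r2 n - 1) * lap q = r2 n * lap q - lap q := by ring
  rw [hsplit, map_add, map_add, map_sub, homogeneousComponent_C_mul,
    homogeneousComponent_C_mul, hc_eul] at h0
  have h1 : homogeneousComponent d (lap q) = 0 := by
    rw [hc_lap, show homogeneousComponent (d + 2) q = 0 from
      homogeneousComponent_eq_zero (d + 2) q (by omega), lap_zero]
  have h2 : homogeneousComponent d (r2 n * lap q) = r2 n * lap h := by
    rcases lt_or_ge d 2 with hdlt | hdge
    · rw [hc_r2_mul_small d hdlt, lap_eq_zero_of_lowdegree hdlt hhom, mul_zero]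
    · obtain ⟨e, he⟩ : ∃ e, d = e + 2 := ⟨d - 2, by omega⟩
      rw [he, hc_r2_mul, hc_lap, ← he]
  rw [h1, h2, euler hhom, ← hdef] at h0
  have hkey : C (2 * (n : ℝ) + 4 * (d : ℝ)) * h = -(r2 n * lap h) := by
    rw [show (C (2 * (n:ℝ) + 4 * (d:ℝ)) : MvPolynomial (Fin n) ℝ)
        = C (2 * (n:ℝ)) + C 4 * C (d : ℝ) by rw [← map_mul, ← map_add]]
    linear_combination h0
  have hpos : (0 : ℝ) < 2 * (n : ℝ) + 4 * (d : ℝ) := by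
    have : (1 : ℝ) ≤ (n : ℝ) := by exact_mod_cast hn
    positivity
  exact hne (key_descent hn d _ hpos h hhom hkey)

lemma lap_sub (f g : MvPolynomial (Fin n) ℝ) : lap (f - g) = lap f - lap g := by
  simp [lap, Finset.sum_sub_distrib]

lemma eq_zero_of_vanish_open {m : ℕ} {p : MvPolynomial (Fin m) ℝ} {U : Set (Fin m → ℝ)}
    (hU : IsOpen U) (hne : U.Nonempty) (hv : ∀ x ∈ U, eval x p = 0) : p = 0 := by
  have hA : AnalyticOnNhd ℝ (fun x : Fin m → ℝ => eval x p) Set.univ :=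
    AnalyticOnNhd.eval_mvPolynomial p
  obtain ⟨z₀, hz₀⟩ := hne
  have hev : (fun x : Fin m → ℝ => eval x p) =ᶠ[nhds z₀] 0 := by
    filter_upwards [hU.mem_nhds hz₀] with x hx using hv x hx
  have hEq := hA.eqOn_zero_of_preconnected_of_eventuallyEq_zero isPreconnected_univ
    (Set.mem_univ z₀) hev
  have : p = (0 : MvPolynomial (Fin m) ℝ) := by
    apply MvPolynomial.funext
    intro x
    simpa using hEq (Set.mem_univ x)
  exact this

lemma exists_factor {m : ℕ} (p : MvPolynomial (Fin (m + 1)) ℝ)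
    (hv : ∀ x : Fin (m + 1) → ℝ, (∑ i, x i ^ 2) = 1 → eval x p = 0) :
    ∃ q, p = (r2 (m + 1) - 1) * q := by
  classical
  set e := finSuccEquiv ℝ m with he
  set S : Polynomial (MvPolynomial (Fin m) ℝ) := Polynomial.X ^ 2 + Polynomial.C (r2 m - 1)
    with hS
  have hCr2 : (Polynomial.C (r2 m) : Polynomial (MvPolynomial (Fin m) ℝ))
      = ∑ x : Fin m, Polynomial.C (X x) ^ 2 := by
    rw [r2, map_sum]
    exact Finset.sum_congr rfl fun i _ => by rw [Polynomial.C_pow]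
  have hSdef : e (r2 (m + 1) - 1) = S := by
    rw [map_sub, map_one, r2, map_sum, Fin.sum_univ_succ]
    simp only [he, map_pow, finSuccEquiv_X_zero, finSuccEquiv_X_succ]
    rw [hS, map_sub, map_one, hCr2]
    abel
  have hmonic : S.Monic := by
    rw [hS]
    exact Polynomial.monic_X_pow_add_C _ (by norm_num)
  have hdegS : S.degree = 2 := by
    rw [hS, Polynomial.degree_X_pow_add_C (by norm_num)]
    rfl
  set rem := e p %ₘ S with hrem
  set quo := e p /ₘ S with hquo
  have hsum : rem + S * quo = e p := Polynomial.modByMonic_add_div (e p) S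
  have hdegrem : rem.degree ≤ 1 := by
    have := Polynomial.degree_modByMonic_lt (e p) hmonic
    rw [hdegS] at this
    exact Order.le_of_lt_succ (by exact_mod_cast this)
  set a := rem.coeff 0 with ha
  set b := rem.coeff 1 with hb
  have hremeq : rem = Polynomial.C b * Polynomial.X + Polynomial.C a :=
    Polynomial.eq_X_add_C_of_degree_le_one hdegrem
  -- evaluation on the open unit ball
  have hval : ∀ x' : Fin m → ℝ, (∑ i, x' i ^ 2) < 1 → eval x' a = 0 ∧ eval x' b = 0 := by
    intro x' hx'
    set s := ∑ i, x' i ^ 2 with hs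
    have hy2 : Real.sqrt (1 - s) ^ 2 = 1 - s := Real.sq_sqrt (by linarith)
    have hyne : Real.sqrt (1 - s) ≠ 0 := by
      intro h
      rw [h] at hy2
      norm_num at hy2
      linarith
    have hzero : ∀ t : ℝ, t ^ 2 = 1 - s → eval x' b * t + eval x' a = 0 := by
      intro t ht
      have hsphere : (∑ i, (Fin.cons t x' : Fin (m + 1) → ℝ) i ^ 2) = 1 := by
        rw [Fin.sum_univ_succ]
        simp only [Fin.cons_zero, Fin.cons_succ]
        rw [← hs, ht]; ring
      have hp0 : Polynomial.eval t (Polynomial.map (eval x') (e p)) = 0 := by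
        rw [← eval_eq_eval_mv_eval']
        exact hv _ hsphere
      have hSev : Polynomial.eval t (Polynomial.map (eval x') S) = 0 := by
        rw [hS]
        simp only [Polynomial.map_add, Polynomial.map_pow, Polynomial.map_X, Polynomial.map_C,
          Polynomial.eval_add, Polynomial.eval_pow, Polynomial.eval_X, Polynomial.eval_C]
        rw [map_sub, map_one]
        have : eval x' (r2 m) = s := by rw [r2, hs, map_sum]; simp
        rw [this, ht]; ring
      rw [← hsum] at hp0
      rw [Polynomial.map_add, Polynomial.map_mul, Polynomial.eval_add, Polynomial.eval_mul,
        hSev, zero_mul, add_zero, hremeq] at hp0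
      simpa using hp0
    have h1 := hzero (Real.sqrt (1 - s)) hy2
    have h2 := hzero (-Real.sqrt (1 - s)) (by rw [neg_sq]; exact hy2)
    constructor
    · linarith
    · have : eval x' b * (2 * Real.sqrt (1 - s)) = 0 := by linarith
      rcases mul_eq_zero.mp this with h | h
      · exact h
      · exact absurd h (by positivity)
  have hUopen : IsOpen {x' : Fin m → ℝ | (∑ i, x' i ^ 2) < 1} :=
    isOpen_lt (continuous_finset_sum _ fun i _ => (continuous_apply i).pow 2) continuous_const
  have hUne : Set.Nonempty {x' : Fin m → ℝ | (∑ i, x' i ^ 2) < 1} :=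
    ⟨0, by simp⟩
  have ha0 : a = 0 := eq_zero_of_vanish_open hUopen hUne fun x hx => (hval x hx).1
  have hb0 : b = 0 := eq_zero_of_vanish_open hUopen hUne fun x hx => (hval x hx).2
  have hrem0 : rem = 0 := by rw [hremeq, ha0, hb0]; simp
  refine ⟨e.symm quo, ?_⟩
  have : e p = e (r2 (m + 1) - 1) * quo := by rw [hSdef, ← hsum, hrem0, zero_add]
  have := congrArg e.symm this
  rw [AlgEquiv.symm_apply_apply] at this
  rw [this, map_mul, AlgEquiv.symm_apply_apply]

end

end SphereAux

open SphereAux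
/-- A harmonic polynomial vanishing on the unit sphere is zero. -/
theorem harmonic_eq_zero_of_vanishes_on_sphere (n : ℕ) (hn : 1 ≤ n)
    (p : MvPolynomial (Fin n) ℝ)
    (hharm : (∑ i, pderiv i (pderiv i p)) = 0)
    (hvanish : ∀ x : Fin n → ℝ, (∑ i, x i ^ 2) = 1 → MvPolynomial.eval x p = 0) :
    p = 0 := by
  obtain ⟨m, rfl⟩ : ∃ m, n = m + 1 := ⟨n - 1, by omega⟩
  obtain ⟨q, hq⟩ := exists_factor p hvanish
  have hlap : lap p = 0 := hharm
  rw [hq] at hlap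
  have expand : lap ((r2 (m + 1) - 1) * q) =
      C (2 * ((m + 1 : ℕ) : ℝ)) * q + C 4 * eul q + (r2 (m + 1) - 1) * lap q := by
    rw [show (r2 (m + 1) - 1) * q = r2 (m + 1) * q - q by ring, lap_sub, lap_r2_mul]
    ring
  rw [expand] at hlap
  rw [hq, q_step (by omega) q hlap, mul_zero]
end

section
/- Let n ≥ 0 and let σ be the ℂ-algebra endomorphism of MvPolynomial (Fin n ⊕ Fin n) ℂ determined by X (Sum.inl j) ↦ X (Sum.inl j) + Complex.I • X (Sum.inr j) and X (Sum.inr j) ↦ X (Sum.inl j) − Complex.I • X (Sum.inr j). Then: (1) σ is bijective; (2) for every P, ∑_{s : Fin n ⊕ Fin n} pderiv s (pderiv s (σ P)) = 4 • σ (□P); and consequently (3) if P is bihomogeneous of bidegree (b, c) and □-harmonic, then σ P is homogeneous of total degree b + c and satisfies ∑_s pderiv s (pderiv s (σ P)) = 0. -/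
open MvPolynomial

/-- The substitution `z_j ↦ x_j + i y_j`, `w_j ↦ x_j − i y_j`: the `ℂ`-algebra endomorphism of
`MvPolynomial (Fin n ⊕ Fin n) ℂ` determined by
`X (Sum.inl j) ↦ X (Sum.inl j) + I • X (Sum.inr j)` and
`X (Sum.inr j) ↦ X (Sum.inl j) − I • X (Sum.inr j)`. -/
noncomputable def realComplexSubst (n : ℕ) :
    MvPolynomial (Fin n ⊕ Fin n) ℂ →ₐ[ℂ] MvPolynomial (Fin n ⊕ Fin n) ℂ :=
  MvPolynomial.aeval (Sum.elim
    (fun j => X (Sum.inl j) + Complex.I • X (Sum.inr j))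
    (fun j => X (Sum.inl j) - Complex.I • X (Sum.inr j)))

section Aux

lemma my_pderiv_comm {σ : Type*} {R : Type*} [CommSemiring R] (i j : σ) (p : MvPolynomial σ R) :
    pderiv i (pderiv j p) = pderiv j (pderiv i p) := by
  classical
  induction p using MvPolynomial.induction_on' with
  | monomial s a =>
    rcases eq_or_ne i j with rfl | hij
    · rfl
    · simp only [pderiv_monomial]
      congr 1
      · rw [tsub_right_comm]
      · rw [Finsupp.tsub_apply, Finsupp.tsub_apply, Finsupp.single_apply, Finsupp.single_apply,
          if_neg hij, if_neg (Ne.symm hij)]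
        simp only [Nat.sub_zero]
        ring
  | add p q hp hq => simp [hp, hq]

end Aux


lemma subst_X_l (n : ℕ) (j : Fin n) :
    realComplexSubst n (X (Sum.inl j)) = X (Sum.inl j) + C Complex.I * X (Sum.inr j) := by
  simp [realComplexSubst, smul_eq_C_mul]

lemma subst_X_r (n : ℕ) (j : Fin n) :
    realComplexSubst n (X (Sum.inr j)) = X (Sum.inl j) - C Complex.I * X (Sum.inr j) := by
  simp [realComplexSubst, smul_eq_C_mul]

lemma chain_l (n : ℕ) (k : Fin n) (P : MvPolynomial (Fin n ⊕ Fin n) ℂ) :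
    pderiv (Sum.inl k) (realComplexSubst n P) =
      realComplexSubst n (pderiv (Sum.inl k) P) + realComplexSubst n (pderiv (Sum.inr k) P) := by
  induction P using MvPolynomial.induction_on with
  | C a => simp [realComplexSubst]
  | add p q hp hq => simp only [map_add, hp, hq]; ring
  | mul_X p s ih =>
    rw [map_mul, pderiv_mul, ih]
    rcases s with j | j <;> rcases eq_or_ne j k with rfl | hjk
    · rw [subst_X_l]
      have d1 : pderiv (Sum.inl j) (X (Sum.inl j) + C Complex.I * X (Sum.inr j)
          : MvPolynomial (Fin n ⊕ Fin n) ℂ) = 1 := by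
        simp [pderiv_X_self, pderiv_X_of_ne (show (Sum.inr j : Fin n ⊕ Fin n) ≠ Sum.inl j by simp)]
      rw [d1]
      have h2 : pderiv (Sum.inl j) (p * X (Sum.inl j)) =
          pderiv (Sum.inl j) p * X (Sum.inl j) + p := by simp [pderiv_mul, mul_comm]; ring
      have h3 : pderiv (Sum.inr j) (p * X (Sum.inl j)) = pderiv (Sum.inr j) p * X (Sum.inl j) := by
        simp [pderiv_mul, pderiv_X_of_ne (show (Sum.inl j : Fin n ⊕ Fin n) ≠ Sum.inr j by simp),
          mul_comm]
      rw [h2, h3]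
      simp only [map_add, map_mul, subst_X_l]
      ring
    · rw [subst_X_l]
      have d1 : pderiv (Sum.inl k) (X (Sum.inl j) + C Complex.I * X (Sum.inr j)
          : MvPolynomial (Fin n ⊕ Fin n) ℂ) = 0 := by
        simp [pderiv_X_of_ne (show (Sum.inl j : Fin n ⊕ Fin n) ≠ Sum.inl k by simp [hjk]),
          pderiv_X_of_ne (show (Sum.inr j : Fin n ⊕ Fin n) ≠ Sum.inl k by simp)]
      rw [d1]
      have h2 : pderiv (Sum.inl k) (p * X (Sum.inl j)) =
          pderiv (Sum.inl k) p * X (Sum.inl j) := by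
        simp [pderiv_mul, mul_comm,
          pderiv_X_of_ne (show (Sum.inl j : Fin n ⊕ Fin n) ≠ Sum.inl k by simp [hjk])]
      have h3 : pderiv (Sum.inr k) (p * X (Sum.inl j)) =
          pderiv (Sum.inr k) p * X (Sum.inl j) := by
        simp [pderiv_mul, mul_comm,
          pderiv_X_of_ne (show (Sum.inl j : Fin n ⊕ Fin n) ≠ Sum.inr k by simp)]
      rw [h2, h3]
      simp only [map_mul, subst_X_l]
      ring
    · rw [subst_X_r]
      have d1 : pderiv (Sum.inl j) (X (Sum.inl j) - C Complex.I * X (Sum.inr j)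
          : MvPolynomial (Fin n ⊕ Fin n) ℂ) = 1 := by
        simp [pderiv_X_self, pderiv_X_of_ne (show (Sum.inr j : Fin n ⊕ Fin n) ≠ Sum.inl j by simp)]
      rw [d1]
      have h2 : pderiv (Sum.inl j) (p * X (Sum.inr j)) =
          pderiv (Sum.inl j) p * X (Sum.inr j) := by
        simp [pderiv_mul, mul_comm,
          pderiv_X_of_ne (show (Sum.inr j : Fin n ⊕ Fin n) ≠ Sum.inl j by simp)]
      have h3 : pderiv (Sum.inr j) (p * X (Sum.inr j)) =
          pderiv (Sum.inr j) p * X (Sum.inr j) + p := by simp [pderiv_mul, mul_comm]; ring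
      rw [h2, h3]
      simp only [map_add, map_mul, subst_X_r]
      ring
    · rw [subst_X_r]
      have d1 : pderiv (Sum.inl k) (X (Sum.inl j) - C Complex.I * X (Sum.inr j)
          : MvPolynomial (Fin n ⊕ Fin n) ℂ) = 0 := by
        simp [pderiv_X_of_ne (show (Sum.inl j : Fin n ⊕ Fin n) ≠ Sum.inl k by simp [hjk]),
          pderiv_X_of_ne (show (Sum.inr j : Fin n ⊕ Fin n) ≠ Sum.inl k by simp)]
      rw [d1]
      have h2 : pderiv (Sum.inl k) (p * X (Sum.inr j)) =
          pderiv (Sum.inl k) p * X (Sum.inr j) := by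
        simp [pderiv_mul, mul_comm,
          pderiv_X_of_ne (show (Sum.inr j : Fin n ⊕ Fin n) ≠ Sum.inl k by simp)]
      have h3 : pderiv (Sum.inr k) (p * X (Sum.inr j)) =
          pderiv (Sum.inr k) p * X (Sum.inr j) := by
        simp [pderiv_mul, mul_comm,
          pderiv_X_of_ne (show (Sum.inr j : Fin n ⊕ Fin n) ≠ Sum.inr k by simp [hjk])]
      rw [h2, h3]
      simp only [map_mul, subst_X_r]
      ring

lemma chain_r (n : ℕ) (k : Fin n) (P : MvPolynomial (Fin n ⊕ Fin n) ℂ) :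
    pderiv (Sum.inr k) (realComplexSubst n P) =
      C Complex.I * realComplexSubst n (pderiv (Sum.inl k) P)
        - C Complex.I * realComplexSubst n (pderiv (Sum.inr k) P) := by
  induction P using MvPolynomial.induction_on with
  | C a => simp [realComplexSubst]
  | add p q hp hq => simp only [map_add, hp, hq]; ring
  | mul_X p s ih =>
    rw [map_mul, pderiv_mul, ih]
    rcases s with j | j <;> rcases eq_or_ne j k with rfl | hjk
    · rw [subst_X_l]
      have d1 : pderiv (Sum.inr j) (X (Sum.inl j) + C Complex.I * X (Sum.inr j)
          : MvPolynomial (Fin n ⊕ Fin n) ℂ) = C Complex.I := by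
        simp [pderiv_X_self, pderiv_X_of_ne (show (Sum.inl j : Fin n ⊕ Fin n) ≠ Sum.inr j by simp)]
      rw [d1]
      have h2 : pderiv (Sum.inl j) (p * X (Sum.inl j)) =
          pderiv (Sum.inl j) p * X (Sum.inl j) + p := by
        simp [pderiv_mul, mul_comm]; ring
      have h3 : pderiv (Sum.inr j) (p * X (Sum.inl j)) =
          pderiv (Sum.inr j) p * X (Sum.inl j) := by
        simp [pderiv_mul, mul_comm,
          pderiv_X_of_ne (show (Sum.inl j : Fin n ⊕ Fin n) ≠ Sum.inr j by simp)]
      rw [h2, h3]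
      simp only [map_add, map_mul, subst_X_l]
      ring
    · rw [subst_X_l]
      have d1 : pderiv (Sum.inr k) (X (Sum.inl j) + C Complex.I * X (Sum.inr j)
          : MvPolynomial (Fin n ⊕ Fin n) ℂ) = 0 := by
        simp [pderiv_X_of_ne (show (Sum.inl j : Fin n ⊕ Fin n) ≠ Sum.inr k by simp),
          pderiv_X_of_ne (show (Sum.inr j : Fin n ⊕ Fin n) ≠ Sum.inr k by simp [hjk])]
      rw [d1]
      have h2 : pderiv (Sum.inl k) (p * X (Sum.inl j)) =
          pderiv (Sum.inl k) p * X (Sum.inl j) := by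
        simp [pderiv_mul, mul_comm,
          pderiv_X_of_ne (show (Sum.inl j : Fin n ⊕ Fin n) ≠ Sum.inl k by simp [hjk])]
      have h3 : pderiv (Sum.inr k) (p * X (Sum.inl j)) =
          pderiv (Sum.inr k) p * X (Sum.inl j) := by
        simp [pderiv_mul, mul_comm,
          pderiv_X_of_ne (show (Sum.inl j : Fin n ⊕ Fin n) ≠ Sum.inr k by simp)]
      rw [h2, h3]
      simp only [map_mul, subst_X_l]
      ring
    · rw [subst_X_r]
      have d1 : pderiv (Sum.inr j) (X (Sum.inl j) - C Complex.I * X (Sum.inr j)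
          : MvPolynomial (Fin n ⊕ Fin n) ℂ) = -C Complex.I := by
        simp [pderiv_X_self, pderiv_X_of_ne (show (Sum.inl j : Fin n ⊕ Fin n) ≠ Sum.inr j by simp)]
      rw [d1]
      have h2 : pderiv (Sum.inl j) (p * X (Sum.inr j)) =
          pderiv (Sum.inl j) p * X (Sum.inr j) := by
        simp [pderiv_mul, mul_comm,
          pderiv_X_of_ne (show (Sum.inr j : Fin n ⊕ Fin n) ≠ Sum.inl j by simp)]
      have h3 : pderiv (Sum.inr j) (p * X (Sum.inr j)) =
          pderiv (Sum.inr j) p * X (Sum.inr j) + p := by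
        simp [pderiv_mul, mul_comm]; ring
      rw [h2, h3]
      simp only [map_add, map_mul, subst_X_r]
      ring
    · rw [subst_X_r]
      have d1 : pderiv (Sum.inr k) (X (Sum.inl j) - C Complex.I * X (Sum.inr j)
          : MvPolynomial (Fin n ⊕ Fin n) ℂ) = 0 := by
        simp [pderiv_X_of_ne (show (Sum.inl j : Fin n ⊕ Fin n) ≠ Sum.inr k by simp),
          pderiv_X_of_ne (show (Sum.inr j : Fin n ⊕ Fin n) ≠ Sum.inr k by simp [hjk])]
      rw [d1]
      have h2 : pderiv (Sum.inl k) (p * X (Sum.inr j)) =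
          pderiv (Sum.inl k) p * X (Sum.inr j) := by
        simp [pderiv_mul, mul_comm,
          pderiv_X_of_ne (show (Sum.inr j : Fin n ⊕ Fin n) ≠ Sum.inl k by simp)]
      have h3 : pderiv (Sum.inr k) (p * X (Sum.inr j)) =
          pderiv (Sum.inr k) p * X (Sum.inr j) := by
        simp [pderiv_mul, mul_comm,
          pderiv_X_of_ne (show (Sum.inr j : Fin n ⊕ Fin n) ≠ Sum.inr k by simp [hjk])]
      rw [h2, h3]
      simp only [map_mul, subst_X_r]
      ring

lemma lap_key (n : ℕ) (P : MvPolynomial (Fin n ⊕ Fin n) ℂ) (k : Fin n) :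
    pderiv (Sum.inl k) (pderiv (Sum.inl k) (realComplexSubst n P)) +
      pderiv (Sum.inr k) (pderiv (Sum.inr k) (realComplexSubst n P)) =
      4 • realComplexSubst n (pderiv (Sum.inl k) (pderiv (Sum.inr k) P)) := by
  have hI : (C Complex.I : MvPolynomial (Fin n ⊕ Fin n) ℂ) * C Complex.I = -1 := by
    rw [← C_mul, Complex.I_mul_I, map_neg, map_one]
  rw [chain_l, chain_r, map_add, map_sub, pderiv_C_mul, pderiv_C_mul,
    chain_l, chain_l, chain_r, chain_r,
    my_pderiv_comm (Sum.inr k) (Sum.inl k) P]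
  rw [show (4 : ℕ) • realComplexSubst n (pderiv (Sum.inl k) (pderiv (Sum.inr k) P)) =
      4 * realComplexSubst n (pderiv (Sum.inl k) (pderiv (Sum.inr k) P)) by
    rw [nsmul_eq_mul]; norm_num]
  linear_combination (realComplexSubst n (pderiv (Sum.inl k) (pderiv (Sum.inl k) P))
    - 2 * realComplexSubst n (pderiv (Sum.inl k) (pderiv (Sum.inr k) P))
    + realComplexSubst n (pderiv (Sum.inr k) (pderiv (Sum.inr k) P))) * hI

lemma lap_eq (n : ℕ) (P : MvPolynomial (Fin n ⊕ Fin n) ℂ) :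
    (∑ s, pderiv s (pderiv s (realComplexSubst n P))) =
      4 • realComplexSubst n (∑ j, pderiv (Sum.inl j) (pderiv (Sum.inr j) P)) := by
  rw [Fintype.sum_sum_type, ← Finset.sum_add_distrib, map_sum, Finset.smul_sum]
  exact Finset.sum_congr rfl fun k _ => lap_key n P k

noncomputable def realComplexInv (n : ℕ) :
    MvPolynomial (Fin n ⊕ Fin n) ℂ →ₐ[ℂ] MvPolynomial (Fin n ⊕ Fin n) ℂ :=
  MvPolynomial.aeval (Sum.elim
    (fun j => (1/2 : ℂ) • (X (Sum.inl j) + X (Sum.inr j)))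
    (fun j => (-Complex.I/2 : ℂ) • (X (Sum.inl j) - X (Sum.inr j))))

lemma inv_comp (n : ℕ) :
    (realComplexInv n).comp (realComplexSubst n) = AlgHom.id ℂ _ := by
  apply MvPolynomial.algHom_ext
  rintro (j | j) <;>
    · simp only [AlgHom.comp_apply, AlgHom.id_apply, realComplexSubst, realComplexInv,
        aeval_X, Sum.elim_inl, Sum.elim_inr, map_add, map_sub, map_smul, smul_add, smul_sub,
        smul_smul]
      match_scalars <;> (try norm_num [Complex.I_sq]) <;> (try ring_nf) <;> (try norm_num [Complex.I_sq])

lemma comp_inv (n : ℕ) :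
    (realComplexSubst n).comp (realComplexInv n) = AlgHom.id ℂ _ := by
  apply MvPolynomial.algHom_ext
  rintro (j | j) <;>
    · simp only [AlgHom.comp_apply, AlgHom.id_apply, realComplexSubst, realComplexInv,
        aeval_X, Sum.elim_inl, Sum.elim_inr, map_add, map_sub, map_smul, smul_add, smul_sub,
        smul_smul]
      match_scalars <;> (try norm_num [Complex.I_sq]) <;> (try ring_nf) <;> (try norm_num [Complex.I_sq])

lemma subst_bijective (n : ℕ) : Function.Bijective (realComplexSubst n) := by
  have h1 : Function.LeftInverse (realComplexInv n) (realComplexSubst n) := fun p =>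
    congrArg (fun f : _ →ₐ[ℂ] _ => f p) (inv_comp n)
  have h2 : Function.RightInverse (realComplexInv n) (realComplexSubst n) := fun p =>
    congrArg (fun f : _ →ₐ[ℂ] _ => f p) (comp_inv n)
  exact ⟨h1.injective, h2.surjective⟩

lemma bihomog_isHomog {n : ℕ} {b c : ℕ} {P : MvPolynomial (Fin n ⊕ Fin n) ℂ}
    (hb : IsWeightedHomogeneous (Sum.elim (fun _ => 1) fun _ => 0) P b)
    (hc : IsWeightedHomogeneous (Sum.elim (fun _ => 0) fun _ => 1) P c) :
    P.IsHomogeneous (b + c) := by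
  intro d hd
  have h1 := hb hd
  have h2 := hc hd
  rw [← h1, ← h2]
  simp only [Finsupp.weight_apply, Finsupp.sum, ← Finset.sum_add_distrib]
  apply Finset.sum_congr rfl
  rintro (i | i) hi <;> simp

lemma subst_isHomog {n : ℕ} {m : ℕ} {P : MvPolynomial (Fin n ⊕ Fin n) ℂ}
    (hP : P.IsHomogeneous m) : (realComplexSubst n P).IsHomogeneous m := by
  have hg : ∀ i : Fin n ⊕ Fin n,
      ((Sum.elim (fun j => X (Sum.inl j) + Complex.I • X (Sum.inr j))
        (fun j => X (Sum.inl j) - Complex.I • X (Sum.inr j)) :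
          _ → MvPolynomial (Fin n ⊕ Fin n) ℂ) i).IsHomogeneous 1 := by
    rintro (j | j) <;> simp only [Sum.elim_inl, Sum.elim_inr, smul_eq_C_mul]
    · exact (isHomogeneous_X _ _).add (isHomogeneous_C_mul_X _ _)
    · exact (isHomogeneous_X _ _).sub (isHomogeneous_C_mul_X _ _)
  have := hP.aeval _ hg
  rwa [one_mul] at this

/-- The substitution `σ` is bijective; it intertwines the real Laplacian with `4` times the
complex Laplacian `□P = ∑ j, pderiv (inl j) (pderiv (inr j) P)`; and consequently it carries
`□`-harmonic bihomogeneous polynomials of bidegree `(b, c)` to harmonic polynomials homogeneous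
of total degree `b + c`. -/
theorem realComplexSubst_bijective_laplacian (n : ℕ) :
    Function.Bijective (realComplexSubst n) ∧
    (∀ P : MvPolynomial (Fin n ⊕ Fin n) ℂ,
      (∑ s, pderiv s (pderiv s (realComplexSubst n P))) =
        4 • realComplexSubst n (∑ j, pderiv (Sum.inl j) (pderiv (Sum.inr j) P))) ∧
    (∀ (b c : ℕ) (P : MvPolynomial (Fin n ⊕ Fin n) ℂ),
      IsWeightedHomogeneous (Sum.elim (fun _ => 1) fun _ => 0) P b →
      IsWeightedHomogeneous (Sum.elim (fun _ => 0) fun _ => 1) P c →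
      (∑ j, pderiv (Sum.inl j) (pderiv (Sum.inr j) P)) = 0 →
      realComplexSubst n P ∈ homogeneousSubmodule (Fin n ⊕ Fin n) ℂ (b + c) ∧
        (∑ s, pderiv s (pderiv s (realComplexSubst n P))) = 0) := by
  refine ⟨subst_bijective n, lap_eq n, ?_⟩
  intro b c P hb hc hH
  refine ⟨(mem_homogeneousSubmodule _ _).mpr (subst_isHomog (bihomog_isHomog hb hc)), ?_⟩
  rw [lap_eq, hH, map_zero, smul_zero]
end

section
/- Let n ≥ 2 and b, c ≥ 0 be natural numbers, and let H_{b,c} be the ℂ-submodule of MvPolynomial (Fin n ⊕ Fin n) ℂ consisting of □-harmonic polynomials that are bihomogeneous of bidegree (b, c). Then (n − 1) * ((n − 2)!)^2 * Module.finrank ℂ H_{b,c} = (b + c + n − 1) * (∏_{j=1}^{n−2} (b + j)) * (∏_{j=1}^{n−2} (c + j)). -/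
open MvPolynomial

/-- The complex Laplacian `□P = ∑ j, pderiv (Sum.inl j) (pderiv (Sum.inr j) P)` as a linear map
on `MvPolynomial (Fin n ⊕ Fin n) ℂ` (the `z`-variables are `X (Sum.inl j)`, the `w`-variables
are `X (Sum.inr j)`). -/
noncomputable def complexLaplacian (n : ℕ) :
    MvPolynomial (Fin n ⊕ Fin n) ℂ →ₗ[ℂ] MvPolynomial (Fin n ⊕ Fin n) ℂ :=
  ∑ j : Fin n, ((pderiv (R := ℂ) (Sum.inl j)).toLinearMap ∘ₗ
    (pderiv (Sum.inr j)).toLinearMap)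

/-- The space `H_{b,c}` of `□`-harmonic polynomials bihomogeneous of bidegree `(b, c)`:
weighted homogeneous of degree `b` for the weight `(1,…,1,0,…,0)` (the `z`-variables) and of
degree `c` for the weight `(0,…,0,1,…,1)` (the `w`-variables), annihilated by `□`. -/
noncomputable def biharmonicSubmodule (n b c : ℕ) :
    Submodule ℂ (MvPolynomial (Fin n ⊕ Fin n) ℂ) :=
  weightedHomogeneousSubmodule ℂ (Sum.elim (fun _ => 1) fun _ => 0) b ⊓
    weightedHomogeneousSubmodule ℂ (Sum.elim (fun _ => 0) fun _ => 1) c ⊓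
    LinearMap.ker (complexLaplacian n)

open Finsupp

set_option linter.unusedSectionVars false
set_option maxHeartbeats 1000000
set_option synthInstance.maxHeartbeats 400000

namespace BHAux
variable {σ : Type*} [Fintype σ] [DecidableEq σ]

lemma coeff_pderiv (i : σ) (P : MvPolynomial σ ℂ) (d : σ →₀ ℕ) :
    coeff d (pderiv i P) = ((d i : ℂ) + 1) * coeff (d + Finsupp.single i 1) P := by
  induction P using MvPolynomial.induction_on' with
  | monomial s a =>
    rw [pderiv_monomial, coeff_monomial, coeff_monomial]
    by_cases h : s = d + Finsupp.single i 1
    · have h1 : s - Finsupp.single i 1 = d := by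
        rw [h]; exact add_tsub_cancel_right d _
      have h2 : s i = d i + 1 := by
        rw [h]; simp [Finsupp.add_apply, Finsupp.single_eq_same]
      rw [if_pos h1, if_pos h, h2]
      push_cast; ring
    · rw [if_neg h]
      by_cases h0 : s i = 0
      · split_ifs with h1
        · rw [h0]; push_cast; ring
        · ring
      · have h1 : s - Finsupp.single i 1 ≠ d := by
          intro h1
          apply h
          rw [← h1, tsub_add_cancel_of_le]
          rwa [Finsupp.single_le_iff, Nat.one_le_iff_ne_zero]
        rw [if_neg h1]; ring
  | add p q hp hq => simp [map_add, coeff_add, hp, hq]; ring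

/-- product of factorials of exponents -/
def Nn (d : σ →₀ ℕ) : ℕ := ∏ j : σ, (d j).factorial

lemma Nn_pos (d : σ →₀ ℕ) : 0 < Nn d :=
  Finset.prod_pos fun j _ => Nat.factorial_pos _

lemma Nn_add_single (d : σ →₀ ℕ) (i : σ) :
    Nn (d + Finsupp.single i 1) = (d i + 1) * Nn d := by
  unfold Nn
  rw [← Finset.mul_prod_erase Finset.univ _ (Finset.mem_univ i),
    ← Finset.mul_prod_erase Finset.univ (fun j => (d j).factorial) (Finset.mem_univ i)]
  have h1 : (d + Finsupp.single i 1 : σ →₀ ℕ) i = d i + 1 := by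
    simp [Finsupp.add_apply, Finsupp.single_eq_same]
  have h2 : ∀ j ∈ Finset.univ.erase i,
      ((d + Finsupp.single i 1 : σ →₀ ℕ) j).factorial = (d j).factorial := by
    intro j hj
    have : j ≠ i := (Finset.mem_erase.mp hj).1
    simp [Finsupp.add_apply, Finsupp.single_apply, Ne.symm this]
  rw [Finset.prod_congr rfl h2, h1, Nat.factorial_succ, mul_assoc]

/-- The Fischer-type pairing. -/
noncomputable def fpair (P Q : MvPolynomial σ ℂ) : ℂ :=
  ∑ d ∈ P.support, coeff d P * coeff d Q * (Nn d : ℂ)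

lemma fpair_eq_sum {P Q : MvPolynomial σ ℂ} {s : Finset (σ →₀ ℕ)}
    (h : P.support ∩ Q.support ⊆ s) :
    fpair P Q = ∑ d ∈ s, coeff d P * coeff d Q * (Nn d : ℂ) := by
  have h1 : fpair P Q = ∑ d ∈ P.support ∪ s, coeff d P * coeff d Q * (Nn d : ℂ) := by
    apply Finset.sum_subset Finset.subset_union_left
    intro d _ hd
    rw [MvPolynomial.mem_support_iff, not_not] at hd
    rw [hd]; ring
  rw [h1]
  apply (Finset.sum_subset Finset.subset_union_right _).symm
  intro d hd hds
  rcases Finset.mem_union.mp hd with h2 | h2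
  · have : d ∉ Q.support := fun hq => hds (h (Finset.mem_inter.mpr ⟨h2, hq⟩))
    rw [MvPolynomial.mem_support_iff, not_not] at this
    rw [this]; ring
  · exact absurd h2 hds

lemma fpair_add_left (P₁ P₂ Q : MvPolynomial σ ℂ) :
    fpair (P₁ + P₂) Q = fpair P₁ Q + fpair P₂ Q := by
  have hs : ∀ R : MvPolynomial σ ℂ, R.support ⊆ P₁.support ∪ P₂.support ∪ R.support :=
    fun R => Finset.subset_union_right
  rw [fpair_eq_sum (s := P₁.support ∪ P₂.support ∪ (P₁ + P₂).support)
      (Finset.inter_subset_left.trans MvPolynomial.support_add |>.trans Finset.subset_union_left),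
    fpair_eq_sum (s := P₁.support ∪ P₂.support ∪ (P₁ + P₂).support)
      (Finset.inter_subset_left.trans
        ((Finset.subset_union_left.trans Finset.subset_union_left))),
    fpair_eq_sum (s := P₁.support ∪ P₂.support ∪ (P₁ + P₂).support)
      (Finset.inter_subset_left.trans
        ((Finset.subset_union_right.trans Finset.subset_union_left))),
    ← Finset.sum_add_distrib]
  apply Finset.sum_congr rfl
  intro d _
  rw [coeff_add]; ring

lemma fpair_smul_left (a : ℂ) (P Q : MvPolynomial σ ℂ) :
    fpair (a • P) Q = a * fpair P Q := by
  rw [fpair_eq_sum (s := P.support)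
      (Finset.inter_subset_left.trans (MvPolynomial.support_smul)), fpair, Finset.mul_sum]
  apply Finset.sum_congr rfl
  intro d _
  rw [MvPolynomial.coeff_smul]; simp; ring

lemma fpair_zero_left (Q : MvPolynomial σ ℂ) : fpair 0 Q = 0 := by
  simp [fpair]

lemma fpair_add_right (P Q₁ Q₂ : MvPolynomial σ ℂ) :
    fpair P (Q₁ + Q₂) = fpair P Q₁ + fpair P Q₂ := by
  unfold fpair
  rw [← Finset.sum_add_distrib]
  apply Finset.sum_congr rfl
  intro d _
  rw [coeff_add]; ring

lemma fpair_sum_right {X : Type*} (P : MvPolynomial σ ℂ) (t : Finset X)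
    (f : X → MvPolynomial σ ℂ) :
    fpair P (∑ x ∈ t, f x) = ∑ x ∈ t, fpair P (f x) := by
  unfold fpair
  rw [Finset.sum_comm]
  apply Finset.sum_congr rfl
  intro d _
  simp [MvPolynomial.coeff_sum, Finset.mul_sum, Finset.sum_mul]


lemma fpair_pderiv (i : σ) (P R : MvPolynomial σ ℂ) :
    fpair (pderiv i P) R = fpair P (X i * R) := by
  classical
  set s : Finset (σ →₀ ℕ) := (pderiv i P).support ∪ R.support with hs
  set t : Finset (σ →₀ ℕ) := s.image (fun d => d + Finsupp.single i 1) with ht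
  have hinj : ∀ x ∈ s, ∀ y ∈ s, x + Finsupp.single i 1 = y + Finsupp.single i 1 → x = y := by
    intro x _ y _ h; exact add_right_cancel h
  have h1 : fpair (pderiv i P) R
      = ∑ d ∈ s, coeff d (pderiv i P) * coeff d R * (Nn d : ℂ) :=
    fpair_eq_sum (Finset.inter_subset_left.trans Finset.subset_union_left)
  have h2 : fpair P (X i * R)
      = ∑ e ∈ t, coeff e P * coeff e (X i * R) * (Nn e : ℂ) := by
    apply fpair_eq_sum
    intro e he
    rw [Finset.mem_inter] at he
    obtain ⟨heP, heXR⟩ := he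
    rw [MvPolynomial.mem_support_iff, coeff_X_mul' e i R] at heXR
    rw [ht, Finset.mem_image]
    by_cases hi : i ∈ e.support
    · rw [if_pos hi] at heXR
      refine ⟨e - Finsupp.single i 1, ?_, ?_⟩
      · rw [hs, Finset.mem_union]
        exact Or.inr (MvPolynomial.mem_support_iff.mpr heXR)
      · rw [tsub_add_cancel_of_le]
        rw [Finsupp.single_le_iff, Nat.one_le_iff_ne_zero]
        exact Finsupp.mem_support_iff.mp hi
    · rw [if_neg hi] at heXR; exact absurd rfl heXR
  rw [h1, h2, Finset.sum_image hinj]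
  apply Finset.sum_congr rfl
  intro d _
  rw [coeff_pderiv, Nn_add_single, add_comm d (Finsupp.single i 1), coeff_X_mul]
  push_cast; ring


lemma fpair_conj_ne_zero {P : MvPolynomial σ ℂ} (hP : P ≠ 0) :
    fpair P (MvPolynomial.map (starRingEnd ℂ) P) ≠ 0 := by
  have key : fpair P (MvPolynomial.map (starRingEnd ℂ) P)
      = ((∑ d ∈ P.support, Complex.normSq (coeff d P) * (Nn d : ℝ) : ℝ) : ℂ) := by
    rw [fpair]
    push_cast
    apply Finset.sum_congr rfl
    intro d _
    rw [MvPolynomial.coeff_map]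
    rw [← Complex.mul_conj]
  rw [key]
  have hpos : (0 : ℝ) < ∑ d ∈ P.support, Complex.normSq (coeff d P) * (Nn d : ℝ) := by
    apply Finset.sum_pos
    · intro d hd
      apply mul_pos
      · exact Complex.normSq_pos.mpr (MvPolynomial.mem_support_iff.mp hd)
      · exact_mod_cast Nn_pos d
    · exact MvPolynomial.support_nonempty.mpr hP
  exact_mod_cast ne_of_gt hpos

/-- homogeneity shifting under pderiv -/
lemma weight_pderiv {w : σ → ℕ} {m : ℕ} {P : MvPolynomial σ ℂ}
    (h : P.IsWeightedHomogeneous w m) (i : σ) {d : σ →₀ ℕ}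
    (hd : coeff d (pderiv i P) ≠ 0) : Finsupp.weight w d + w i = m := by
  rw [coeff_pderiv] at hd
  have h2 : coeff (d + Finsupp.single i 1) P ≠ 0 := by
    intro h0; rw [h0, mul_zero] at hd; exact hd rfl
  have h3 := h h2
  rw [map_add] at h3
  rw [← h3]
  congr 1
  rw [Finsupp.weight_apply, Finsupp.sum_single_index] <;> simp

lemma pderiv_mem_of_weight_zero {w : σ → ℕ} {m : ℕ} {P : MvPolynomial σ ℂ}
    (h : P.IsWeightedHomogeneous w m) (i : σ) (hw : w i = 0) :
    (pderiv i P).IsWeightedHomogeneous w m := by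
  intro d hd
  have := weight_pderiv h i hd
  rwa [hw, add_zero] at this

lemma pderiv_mem_of_weight_one {w : σ → ℕ} {m : ℕ} {P : MvPolynomial σ ℂ}
    (h : P.IsWeightedHomogeneous w (m + 1)) (i : σ) (hw : w i = 1) :
    (pderiv i P).IsWeightedHomogeneous w m := by
  intro d hd
  have := weight_pderiv h i hd
  rw [hw] at this
  omega

lemma pderiv_eq_zero_of_weight_one {w : σ → ℕ} {P : MvPolynomial σ ℂ}
    (h : P.IsWeightedHomogeneous w 0) (i : σ) (hw : w i = 1) :
    pderiv i P = 0 := by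
  rw [MvPolynomial.eq_zero_iff]
  intro d
  by_contra hd
  have := weight_pderiv h i hd
  rw [hw] at this
  omega


end BHAux


namespace BHAux

variable {n : ℕ}

/-- z-weight -/
abbrev wz (n : ℕ) : Fin n ⊕ Fin n → ℕ := Sum.elim (fun _ => 1) fun _ => 0
/-- w-weight -/
abbrev ww (n : ℕ) : Fin n ⊕ Fin n → ℕ := Sum.elim (fun _ => 0) fun _ => 1

/-- the bihomogeneous space -/
noncomputable def Vsub (n b c : ℕ) : Submodule ℂ (MvPolynomial (Fin n ⊕ Fin n) ℂ) :=
  weightedHomogeneousSubmodule ℂ (wz n) b ⊓ weightedHomogeneousSubmodule ℂ (ww n) c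

lemma weight_wz (d : (Fin n ⊕ Fin n) →₀ ℕ) :
    Finsupp.weight (wz n) d = ∑ j : Fin n, d (Sum.inl j) := by
  rw [Finsupp.weight_apply, Finsupp.sum_fintype _ _ (by simp)]
  rw [Fintype.sum_sum_type]
  simp

lemma weight_ww (d : (Fin n ⊕ Fin n) →₀ ℕ) :
    Finsupp.weight (ww n) d = ∑ j : Fin n, d (Sum.inr j) := by
  rw [Finsupp.weight_apply, Finsupp.sum_fintype _ _ (by simp)]
  rw [Fintype.sum_sum_type]
  simp

/-- exponent set of the bihomogeneous space -/
def Tset (n b c : ℕ) : Set ((Fin n ⊕ Fin n) →₀ ℕ) :=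
  {d | Finsupp.weight (wz n) d = b ∧ Finsupp.weight (ww n) d = c}

lemma Vsub_eq (n b c : ℕ) : Vsub n b c = MvPolynomial.restrictSupport ℂ (Tset n b c) := by
  rw [Vsub, weightedHomogeneousSubmodule_eq_finsupp_supported,
    weightedHomogeneousSubmodule_eq_finsupp_supported, MvPolynomial.restrictSupport,
    ]
  ext x
  exact Set.subset_inter_iff.symm

/-- finsupps with given sum are the same as multisets of given size -/
noncomputable def symEquiv (N k : ℕ) : {f : Fin N →₀ ℕ // ∑ j, f j = k} ≃ Sym (Fin N) k where
  toFun f := ⟨Finsupp.toMultiset f.1, by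
    rw [Finsupp.card_toMultiset, Finsupp.sum_fintype _ _ (by simp)]
    exact f.2⟩
  invFun s := ⟨Multiset.toFinsupp s.1, by
    have h : (Multiset.toFinsupp s.1).sum (fun _ ↦ id) = k := by
      rw [Multiset.toFinsupp_sum_eq]; exact s.2
    rw [Finsupp.sum_fintype _ _ (by simp)] at h
    exact h⟩
  left_inv f := by ext; simp
  right_inv s := by ext; simp

/-- the exponent set is equivalent to a product of symmetric powers -/
noncomputable def tsetEquiv (n b c : ℕ) :
    Tset n b c ≃ Sym (Fin n) b × Sym (Fin n) c := by
  refine Equiv.trans ?_ (Equiv.prodCongr (symEquiv n b) (symEquiv n c))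
  refine Equiv.trans ?_ (Equiv.subtypeProdEquivProd
    (p := fun f : Fin n →₀ ℕ => ∑ j, f j = b) (q := fun f : Fin n →₀ ℕ => ∑ j, f j = c))
  refine (Finsupp.sumFinsuppEquivProdFinsupp (α := Fin n) (β := Fin n) (γ := ℕ)).subtypeEquiv ?_
  intro d
  constructor
  · rintro ⟨h1, h2⟩
    constructor
    · rw [← h1, weight_wz]
      exact Finset.sum_congr rfl fun j _ => (Finsupp.fst_sumFinsuppEquivProdFinsupp d j).symm |>.symm
    · rw [← h2, weight_ww]
      exact Finset.sum_congr rfl fun j _ => (Finsupp.snd_sumFinsuppEquivProdFinsupp d j).symm |>.symm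
  · rintro ⟨h1, h2⟩
    constructor
    · rw [weight_wz, ← h1]
      exact Finset.sum_congr rfl fun j _ => (Finsupp.fst_sumFinsuppEquivProdFinsupp d j).symm
    · rw [weight_ww, ← h2]
      exact Finset.sum_congr rfl fun j _ => (Finsupp.snd_sumFinsuppEquivProdFinsupp d j).symm

noncomputable instance (n b c : ℕ) : Fintype (Tset n b c) :=
  Fintype.ofEquiv _ (tsetEquiv n b c).symm

instance fdVsub (n b c : ℕ) : FiniteDimensional ℂ (Vsub n b c) := by
  rw [Vsub_eq]
  exact Module.Finite.of_basis (MvPolynomial.basisRestrictSupport ℂ (Tset n b c))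

lemma finrank_Vsub (n b c : ℕ) :
    Module.finrank ℂ (Vsub n b c) = Nat.multichoose n b * Nat.multichoose n c := by
  rw [Vsub_eq,
    Module.finrank_eq_card_basis (MvPolynomial.basisRestrictSupport ℂ (Tset n b c)),
    Fintype.card_congr (tsetEquiv n b c), Fintype.card_prod,
    Sym.card_sym_eq_multichoose, Sym.card_sym_eq_multichoose, Fintype.card_fin]


lemma laplacian_apply (P : MvPolynomial (Fin n ⊕ Fin n) ℂ) :
    complexLaplacian n P = ∑ j : Fin n, pderiv (Sum.inl j) (pderiv (Sum.inr j) P) := by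
  rw [complexLaplacian, LinearMap.sum_apply]
  rfl

lemma fpair_sum_left {X : Type*} (t : Finset X) (f : X → MvPolynomial (Fin n ⊕ Fin n) ℂ)
    (R : MvPolynomial (Fin n ⊕ Fin n) ℂ) :
    fpair (∑ x ∈ t, f x) R = ∑ x ∈ t, fpair (f x) R := by
  classical
  induction t using Finset.induction_on with
  | empty => simp [fpair_zero_left]
  | insert _ _ hx ih =>
    rw [Finset.sum_insert hx, Finset.sum_insert hx, fpair_add_left, ih]

/-- the invariant quadratic polynomial -/
noncomputable def qp (n : ℕ) : MvPolynomial (Fin n ⊕ Fin n) ℂ :=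
  ∑ j : Fin n, X (Sum.inl j) * X (Sum.inr j)

lemma fpair_laplacian (P R : MvPolynomial (Fin n ⊕ Fin n) ℂ) :
    fpair (complexLaplacian n P) R = fpair P (qp n * R) := by
  rw [laplacian_apply, fpair_sum_left, qp, Finset.sum_mul, fpair_sum_right]
  apply Finset.sum_congr rfl
  intro j _
  rw [fpair_pderiv, fpair_pderiv]
  congr 1
  ring

lemma isWH_X (w : Fin n ⊕ Fin n → ℕ) (i : Fin n ⊕ Fin n) :
    (X i : MvPolynomial (Fin n ⊕ Fin n) ℂ).IsWeightedHomogeneous w (w i) := by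
  apply isWeightedHomogeneous_monomial
  rw [Finsupp.weight_apply, Finsupp.sum_single_index] <;> simp

lemma qp_mem (n b : ℕ) (w : Fin n ⊕ Fin n → ℕ)
    (hw : ∀ j : Fin n, w (Sum.inl j) + w (Sum.inr j) = 1) :
    (qp n).IsWeightedHomogeneous w 1 := by
  rw [← mem_weightedHomogeneousSubmodule]
  apply Submodule.sum_mem
  intro j _
  rw [mem_weightedHomogeneousSubmodule, ← hw j]
  exact (isWH_X w (Sum.inl j)).mul (isWH_X w (Sum.inr j))

lemma qp_ne_zero (hn : 0 < n) : qp n ≠ 0 := by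
  intro h
  have h0 : coeff (Finsupp.single (Sum.inl (⟨0, hn⟩ : Fin n)) 1
      + Finsupp.single (Sum.inr (⟨0, hn⟩ : Fin n)) 1) (qp n) = 1 := by
    rw [qp, MvPolynomial.coeff_sum]
    have hterm : ∀ j : Fin n,
        coeff (Finsupp.single (Sum.inl (⟨0, hn⟩ : Fin n)) 1
          + Finsupp.single (Sum.inr (⟨0, hn⟩ : Fin n)) 1)
          (X (Sum.inl j) * X (Sum.inr j) : MvPolynomial (Fin n ⊕ Fin n) ℂ)
        = if j = ⟨0, hn⟩ then 1 else 0 := by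
      intro j
      rw [X, X, monomial_mul, one_mul, coeff_monomial]
      split_ifs with h1 h2 h2
      · rfl
      · exfalso; apply h2
        have := DFunLike.congr_fun h1 (Sum.inl (⟨0, hn⟩ : Fin n))
        simp only [Finsupp.coe_add, Pi.add_apply, Finsupp.single_apply] at this
        by_contra hj
        simp [Sum.inl.injEq, hj] at this
      · exfalso; apply h1; rw [h2]
      · rfl
    rw [Finset.sum_congr rfl fun j _ => hterm j]
    simp
  rw [h] at h0
  simp at h0

lemma laplacian_mem_Vsub {b c : ℕ} {P : MvPolynomial (Fin n ⊕ Fin n) ℂ}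
    (hP : P ∈ Vsub n (b + 1) (c + 1)) : complexLaplacian n P ∈ Vsub n b c := by
  obtain ⟨h1, h2⟩ := hP
  simp only [SetLike.mem_coe, mem_weightedHomogeneousSubmodule] at h1 h2
  rw [laplacian_apply]
  apply Submodule.sum_mem
  intro j _
  constructor
  · rw [SetLike.mem_coe, mem_weightedHomogeneousSubmodule]
    exact pderiv_mem_of_weight_one (pderiv_mem_of_weight_zero h1 (Sum.inr j) rfl)
      (Sum.inl j) rfl
  · rw [SetLike.mem_coe, mem_weightedHomogeneousSubmodule]
    exact pderiv_mem_of_weight_zero (pderiv_mem_of_weight_one h2 (Sum.inr j) rfl)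
      (Sum.inl j) rfl

lemma laplacian_zero_of_z_deg_zero {c : ℕ} {P : MvPolynomial (Fin n ⊕ Fin n) ℂ}
    (hP : P ∈ Vsub n 0 c) : complexLaplacian n P = 0 := by
  obtain ⟨h1, _⟩ := hP
  simp only [SetLike.mem_coe, mem_weightedHomogeneousSubmodule] at h1
  rw [laplacian_apply]
  apply Finset.sum_eq_zero
  intro j _
  exact pderiv_eq_zero_of_weight_one (pderiv_mem_of_weight_zero h1 (Sum.inr j) rfl)
    (Sum.inl j) rfl

lemma laplacian_zero_of_w_deg_zero {b : ℕ} {P : MvPolynomial (Fin n ⊕ Fin n) ℂ}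
    (hP : P ∈ Vsub n b 0) : complexLaplacian n P = 0 := by
  obtain ⟨_, h2⟩ := hP
  simp only [SetLike.mem_coe, mem_weightedHomogeneousSubmodule] at h2
  rw [laplacian_apply]
  apply Finset.sum_eq_zero
  intro j _
  rw [pderiv_eq_zero_of_weight_one h2 (Sum.inr j) rfl, map_zero]

lemma conj_isWH {w : Fin n ⊕ Fin n → ℕ} {m : ℕ} {P : MvPolynomial (Fin n ⊕ Fin n) ℂ}
    (h : P.IsWeightedHomogeneous w m) :
    (MvPolynomial.map (starRingEnd ℂ) P).IsWeightedHomogeneous w m := by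
  intro d hd
  rw [MvPolynomial.coeff_map] at hd
  apply h
  intro h0
  rw [h0] at hd
  simp at hd

lemma conj_qp_mul (Q : MvPolynomial (Fin n ⊕ Fin n) ℂ) :
    MvPolynomial.map (starRingEnd ℂ) (qp n * Q)
      = qp n * MvPolynomial.map (starRingEnd ℂ) Q := by
  rw [map_mul]
  congr 1
  rw [qp, map_sum]
  apply Finset.sum_congr rfl
  intro j _
  rw [map_mul, MvPolynomial.map_X, MvPolynomial.map_X]


lemma biharm_eq_inf (n b c : ℕ) :
    biharmonicSubmodule n b c = Vsub n b c ⊓ LinearMap.ker (complexLaplacian n) := rfl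

lemma biharm_eq_of_left_zero (n c : ℕ) : biharmonicSubmodule n 0 c = Vsub n 0 c := by
  rw [biharm_eq_inf, inf_eq_left]
  intro P hP
  exact LinearMap.mem_ker.mpr (laplacian_zero_of_z_deg_zero hP)

lemma biharm_eq_of_right_zero (n b : ℕ) : biharmonicSubmodule n b 0 = Vsub n b 0 := by
  rw [biharm_eq_inf, inf_eq_left]
  intro P hP
  exact LinearMap.mem_ker.mpr (laplacian_zero_of_w_deg_zero hP)

lemma finrank_add (hn : 0 < n) (b c : ℕ) :
    Module.finrank ℂ (biharmonicSubmodule n (b + 1) (c + 1))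
        + Nat.multichoose n b * Nat.multichoose n c
      = Nat.multichoose n (b + 1) * Nat.multichoose n (c + 1) := by
  classical
  set V₁ := Vsub n (b + 1) (c + 1)
  set V₀ := Vsub n b c
  have hmap : ∀ x ∈ V₁, complexLaplacian n x ∈ V₀ := fun x hx => laplacian_mem_Vsub hx
  set L : V₁ →ₗ[ℂ] V₀ := (complexLaplacian n).restrict hmap with hL
  have hmul : ∀ x ∈ V₀, qp n * x ∈ V₁ := by
    intro x hx
    obtain ⟨hx1, hx2⟩ := hx
    simp only [SetLike.mem_coe, mem_weightedHomogeneousSubmodule] at hx1 hx2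
    constructor
    · rw [SetLike.mem_coe, mem_weightedHomogeneousSubmodule]
      have := (qp_mem n b (wz n) (fun j => rfl)).mul hx1
      rwa [add_comm] at this
    · rw [SetLike.mem_coe, mem_weightedHomogeneousSubmodule]
      have := (qp_mem n c (ww n) (fun j => rfl)).mul hx2
      rwa [add_comm] at this
  set Mq : V₀ →ₗ[ℂ] V₁ := (LinearMap.mulLeft ℂ (qp n)).restrict hmul with hMq
  have hinj : Function.Injective (L ∘ₗ Mq) := by
    rw [← LinearMap.ker_eq_bot, LinearMap.ker_eq_bot']
    intro x hx
    have hx0 : complexLaplacian n (qp n * (x : MvPolynomial (Fin n ⊕ Fin n) ℂ)) = 0 := by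
      have := congrArg (Subtype.val) hx
      exact this
    have hq0 : qp n * (x : MvPolynomial (Fin n ⊕ Fin n) ℂ) = 0 := by
      by_contra hne
      apply fpair_conj_ne_zero hne
      rw [conj_qp_mul, ← fpair_laplacian, hx0, fpair_zero_left]
    have hx1 : (x : MvPolynomial (Fin n ⊕ Fin n) ℂ) = 0 := by
      rcases mul_eq_zero.mp hq0 with h | h
      · exact absurd h (qp_ne_zero hn)
      · exact h
    exact Subtype.ext hx1
  have hsurjT : Function.Surjective (L ∘ₗ Mq) := LinearMap.injective_iff_surjective.mp hinj
  have hsurjL : Function.Surjective L := by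
    intro y
    obtain ⟨x, hx⟩ := hsurjT y
    exact ⟨Mq x, hx⟩
  have hrank := LinearMap.finrank_range_add_finrank_ker L
  rw [LinearMap.range_eq_top.mpr hsurjL, finrank_top] at hrank
  have hker : Submodule.comap V₁.subtype (biharmonicSubmodule n (b + 1) (c + 1))
      = LinearMap.ker L := by
    ext x
    simp only [Submodule.mem_comap, Submodule.subtype_apply, LinearMap.mem_ker,
      biharm_eq_inf, Submodule.mem_inf]
    constructor
    · rintro ⟨-, h2⟩
      exact Subtype.ext h2
    · intro h
      exact ⟨x.2, congrArg Subtype.val h⟩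
  have hfr : Module.finrank ℂ (biharmonicSubmodule n (b + 1) (c + 1))
      = Module.finrank ℂ (LinearMap.ker L) := by
    rw [← hker]
    exact (Submodule.comapSubtypeEquivOfLe
      (inf_le_left : biharmonicSubmodule n (b+1) (c+1) ≤ V₁)).finrank_eq.symm
  rw [hfr]
  have h0 : Module.finrank ℂ V₀ = Nat.multichoose n b * Nat.multichoose n c :=
    finrank_Vsub n b c
  have h1 : Module.finrank ℂ V₁ = Nat.multichoose n (b+1) * Nat.multichoose n (c+1) :=
    finrank_Vsub n (b+1) (c+1)
  omega


lemma prod_Icc_asc (x m : ℕ) :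
    ∏ j ∈ Finset.Icc 1 m, (x + j) = (x + 1).ascFactorial m := by
  induction m with
  | zero => simp
  | succ m ih =>
    rw [Finset.prod_Icc_succ_top (Nat.succ_le_succ (Nat.zero_le m)), ih,
      Nat.ascFactorial_succ]
    ring_nf

lemma fact_mul_multichoose (m k : ℕ) :
    (m + 1).factorial * Nat.multichoose (m + 2) k = (k + 1).ascFactorial (m + 1) := by
  rw [Nat.multichoose_eq, Nat.ascFactorial_eq_factorial_mul_choose]
  congr 1
  have h1 : m + 2 + k - 1 = k + (m + 1) := by omega
  rw [h1]
  have h3 := Nat.choose_symm (Nat.le_add_left (m + 1) k)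
  rwa [Nat.add_sub_cancel] at h3

lemma asc_succ_left (x m : ℕ) :
    (x + 1).ascFactorial (m + 1) = (x + 1) * (x + 2).ascFactorial m := by
  rw [Nat.ascFactorial_succ]
  exact (Nat.succ_ascFactorial (x + 1) m).symm

lemma arith_key (m β γ : ℕ) :
    (m + 1).factorial ^ 2 * (Nat.multichoose (m+2) (β+1) * Nat.multichoose (m+2) (γ+1))
      = (m + 1) * ((β + γ + m + 3) * ((β+2).ascFactorial m) * ((γ+2).ascFactorial m))
        + (m + 1).factorial ^ 2 * (Nat.multichoose (m+2) β * Nat.multichoose (m+2) γ) := by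
  have e1 : (m + 1).factorial ^ 2
        * (Nat.multichoose (m+2) (β+1) * Nat.multichoose (m+2) (γ+1))
      = ((m+1).factorial * Nat.multichoose (m+2) (β+1))
        * ((m+1).factorial * Nat.multichoose (m+2) (γ+1)) := by ring
  have e2 : (m + 1).factorial ^ 2 * (Nat.multichoose (m+2) β * Nat.multichoose (m+2) γ)
      = ((m+1).factorial * Nat.multichoose (m+2) β)
        * ((m+1).factorial * Nat.multichoose (m+2) γ) := by ring
  rw [e1, e2, fact_mul_multichoose, fact_mul_multichoose, fact_mul_multichoose,
    fact_mul_multichoose]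
  rw [show β + 1 + 1 = β + 2 from rfl, show γ + 1 + 1 = γ + 2 from rfl,
    Nat.ascFactorial_succ, Nat.ascFactorial_succ, asc_succ_left, asc_succ_left]
  ring

lemma edge_arith (m c : ℕ) :
    (m + 1) * m.factorial ^ 2 * Nat.multichoose (m + 2) c
      = (c + m + 1) * m.factorial * (c + 1).ascFactorial m := by
  apply Nat.eq_of_mul_eq_mul_left (show 0 < m + 1 by omega)
  have e1 : (m + 1) * ((m + 1) * m.factorial ^ 2 * Nat.multichoose (m + 2) c)
      = (m + 1).factorial * ((m + 1).factorial * Nat.multichoose (m + 2) c) := by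
    rw [Nat.factorial_succ]; ring
  rw [e1, fact_mul_multichoose, Nat.ascFactorial_succ, Nat.factorial_succ]
  ring

end BHAux


/-- Dimension formula for the space `H_{b,c}` of `□`-harmonic bihomogeneous polynomials of
bidegree `(b, c)` in `n ≥ 2` complex variables:
`(n−1)·((n−2)!)² · dim H_{b,c} = (b+c+n−1) · ∏_{j=1}^{n−2}(b+j) · ∏_{j=1}^{n−2}(c+j)`. -/
theorem finrank_biharmonicSubmodule (n b c : ℕ) (hn : 2 ≤ n) :
    (n - 1) * (n - 2).factorial ^ 2 * Module.finrank ℂ (biharmonicSubmodule n b c) =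
      (b + c + n - 1) * (∏ j ∈ Finset.Icc 1 (n - 2), (b + j)) *
        ∏ j ∈ Finset.Icc 1 (n - 2), (c + j) := by
  obtain ⟨m, rfl⟩ : ∃ m, n = m + 2 := ⟨n - 2, by omega⟩
  rw [show m + 2 - 1 = m + 1 from by omega, show m + 2 - 2 = m from by omega]
  match b, c with
  | 0, c =>
    rw [BHAux.biharm_eq_of_left_zero, BHAux.finrank_Vsub, Nat.multichoose_zero_right, one_mul,
      show (0 : ℕ) + c + (m + 2) - 1 = c + m + 1 from by omega]
    have h0 : ∏ j ∈ Finset.Icc 1 m, (0 + j) = m.factorial := by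
      rw [BHAux.prod_Icc_asc 0 m, Nat.one_ascFactorial]
    rw [h0, BHAux.prod_Icc_asc c m]
    exact BHAux.edge_arith m c
  | b + 1, 0 =>
    rw [BHAux.biharm_eq_of_right_zero, BHAux.finrank_Vsub, Nat.multichoose_zero_right, mul_one,
      show b + 1 + 0 + (m + 2) - 1 = (b + 1) + m + 1 from by omega]
    have h0 : ∏ j ∈ Finset.Icc 1 m, (0 + j) = m.factorial := by
      rw [BHAux.prod_Icc_asc 0 m, Nat.one_ascFactorial]
    rw [h0, BHAux.prod_Icc_asc (b + 1) m]
    rw [show ((b + 1) + m + 1) * ((b + 1) + 1).ascFactorial m * m.factorial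
        = ((b + 1) + m + 1) * m.factorial * ((b + 1) + 1).ascFactorial m from by ring]
    exact BHAux.edge_arith m (b + 1)
  | b + 1, c + 1 =>
    have hsum := BHAux.finrank_add (n := m + 2) (by omega) b c
    rw [show b + 1 + (c + 1) + (m + 2) - 1 = b + c + m + 3 from by omega,
      BHAux.prod_Icc_asc (b + 1) m, BHAux.prod_Icc_asc (c + 1) m,
      show b + 1 + 1 = b + 2 from rfl, show c + 1 + 1 = c + 2 from rfl]
    apply Nat.eq_of_mul_eq_mul_left (show 0 < m + 1 by omega)
    have e3 : (m + 1) * ((m + 1) * m.factorial ^ 2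
          * Module.finrank ℂ (biharmonicSubmodule (m + 2) (b + 1) (c + 1)))
        = (m + 1).factorial ^ 2
          * Module.finrank ℂ (biharmonicSubmodule (m + 2) (b + 1) (c + 1)) := by
      rw [Nat.factorial_succ]; ring
    have e1 : (m + 1).factorial ^ 2
          * Module.finrank ℂ (biharmonicSubmodule (m + 2) (b + 1) (c + 1))
          + (m + 1).factorial ^ 2
            * (Nat.multichoose (m + 2) b * Nat.multichoose (m + 2) c)
        = (m + 1).factorial ^ 2
          * (Nat.multichoose (m + 2) (b + 1) * Nat.multichoose (m + 2) (c + 1)) := by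
      rw [← Nat.mul_add, hsum]
    have e2 := BHAux.arith_key m b c
    rw [e2] at e1
    have e4 := Nat.add_right_cancel e1
    rw [e3, e4]
end
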